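/- Let f : α → α (A), g : β → β (B), h : γ → γ (X), and h' : δ → δ (Y) be connected FGs on finite nonempty types, with cycle lengths c_A, c_B, c_X, c_Y respectively, such that lcm(c_A, c_X) = c_B and c_Y = c_X. Let a be a periodic point of f, x of h, y of h', and b of g. Suppose: (i) the digraph of U(f,a) ⋆ U(h,x) is isomorphic to the digraph of U(g,b); and (ii) there exists k : ℕ such that, with a' = f^[k] a and b' = g^[k] b, the digraph of U(f,a') ⋆ U(h',y) is isomorphic to the digraph of U(g,b'). Then the FGs h and h' are isomorphic. -/

import Mathlib

namespace DDS

/-- A homomorphism of digraphs `(γ, E) → (δ, E')` is a map preserving edges. -/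
def IsHom {γ : Type*} {δ : Type*} (E : γ → γ → Prop) (E' : δ → δ → Prop) (τ : γ → δ) : Prop :=
  ∀ ⦃u v⦄, E u v → E' (τ u) (τ v)

/-- Two digraphs are isomorphic if there is an edge-preserving (in both directions) bijection. -/
def Isomorphic {γ : Type*} {δ : Type*} (E : γ → γ → Prop) (E' : δ → δ → Prop) : Prop :=
  ∃ e : γ ≃ δ, ∀ u v, E u v ↔ E' (e u) (e v)

/-- The number of digraph homomorphisms from `(γ, E)` to `(δ, E')`. -/
noncomputable def homCount (γ : Type*) (δ : Type*) (E : γ → γ → Prop) (E' : δ → δ → Prop) : ℕ :=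
  Nat.card {τ : γ → δ // IsHom E E' τ}

/-- An in-tree: a root and a parent map such that the root is a fixed point and every
vertex reaches the root by iterating the parent map. -/
structure InTree (V : Type*) where
  root : V
  parent : V → V
  parent_root : parent root = root
  reaches_root : ∀ v, ∃ k, parent^[k] v = root

namespace InTree

variable {V : Type*}

/-- Edges of an in-tree are directed towards the root. -/
def Edge (T : InTree V) (v w : V) : Prop := v ≠ T.root ∧ w = T.parent v

/-- The height of a vertex: the least `k` with `parent^[k] v = root`. -/
noncomputable def height (T : InTree V) (v : V) : ℕ := sInf {k | T.parent^[k] v = T.root}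

lemma height_spec (T : InTree V) (v : V) : T.parent^[T.height v] v = T.root :=
  Nat.sInf_mem (T.reaches_root v)

@[simp] lemma height_root (T : InTree V) : T.height T.root = 0 :=
  Nat.sInf_eq_zero.mpr (Or.inl (by simp))

lemma height_eq_zero_iff (T : InTree V) {v : V} : T.height v = 0 ↔ v = T.root := by
  constructor
  · intro h
    have hs := T.height_spec v
    rw [h] at hs
    simpa using hs
  · rintro rfl
    exact T.height_root

lemma height_parent (T : InTree V) {v : V} (hv : v ≠ T.root) :
    T.height v = T.height (T.parent v) + 1 := by
  have h1 : T.height v ≠ 0 := fun h => hv (T.height_eq_zero_iff.mp h)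
  obtain ⟨m, hm⟩ := Nat.exists_eq_succ_of_ne_zero h1
  have hsp : T.parent^[T.height v] v = T.root := T.height_spec v
  rw [hm, Function.iterate_succ_apply] at hsp
  have hle : T.height (T.parent v) ≤ m := Nat.sInf_le hsp
  have hge : T.height v ≤ T.height (T.parent v) + 1 := by
    apply Nat.sInf_le
    show T.parent^[T.height (T.parent v) + 1] v = T.root
    rw [Function.iterate_succ_apply]
    exact T.height_spec (T.parent v)
  omega

lemma height_parent_le (T : InTree V) (v : V) : T.height (T.parent v) ≤ T.height v := by
  by_cases hv : v = T.root
  · subst hv; rw [T.parent_root]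
  · rw [T.height_parent hv]; omega

/-- The height of a finite in-tree: the maximum height of a vertex. -/
noncomputable def treeHeight [Fintype V] (T : InTree V) : ℕ := Finset.univ.sup T.height

section Star

variable {V₁ V₂ : Type*} (T₁ : InTree V₁) (T₂ : InTree V₂)

/-- Vertices of the `⋆` product: pairs of vertices of equal height. -/
def StarVertex := {x : V₁ × V₂ // T₁.height x.1 = T₂.height x.2}

lemma star_parent_mem (x : V₁ × V₂) (hx : T₁.height x.1 = T₂.height x.2) :
    T₁.height (T₁.parent x.1) = T₂.height (T₂.parent x.2) := by
  by_cases h : x.1 = T₁.root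
  · have h2 : x.2 = T₂.root := by
      apply T₂.height_eq_zero_iff.mp
      rw [← hx, h, T₁.height_root]
    rw [h, h2, T₁.parent_root, T₂.parent_root, T₁.height_root, T₂.height_root]
  · have h2 : x.2 ≠ T₂.root := by
      intro hc
      apply h
      apply T₁.height_eq_zero_iff.mp
      rw [hx, hc, T₂.height_root]
    have e1 := T₁.height_parent h
    have e2 := T₂.height_parent h2
    omega

/-- The parent map of the `⋆` product. -/
def starParent (x : StarVertex T₁ T₂) : StarVertex T₁ T₂ :=
  ⟨(T₁.parent x.1.1, T₂.parent x.1.2), star_parent_mem T₁ T₂ x.1 x.2⟩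

lemma starParent_iterate (k : ℕ) (x : StarVertex T₁ T₂) :
    ((starParent T₁ T₂)^[k] x).1 = (T₁.parent^[k] x.1.1, T₂.parent^[k] x.1.2) := by
  induction k generalizing x with
  | zero => simp
  | succ k ih =>
      rw [Function.iterate_succ_apply, Function.iterate_succ_apply,
        Function.iterate_succ_apply, ih]
      rfl

/-- The `⋆` product of two in-trees. -/
def star : InTree (StarVertex T₁ T₂) where
  root := ⟨(T₁.root, T₂.root), by simp⟩
  parent := starParent T₁ T₂
  parent_root := by
    apply Subtype.ext
    show (T₁.parent T₁.root, T₂.parent T₂.root) = (T₁.root, T₂.root)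
    rw [T₁.parent_root, T₂.parent_root]
  reaches_root := by
    intro x
    refine ⟨T₁.height x.1.1, Subtype.ext ?_⟩
    rw [starParent_iterate]
    have h1 : T₁.parent^[T₁.height x.1.1] x.1.1 = T₁.root := T₁.height_spec _
    have h2 : T₂.parent^[T₁.height x.1.1] x.1.2 = T₂.root := by
      rw [x.2]; exact T₂.height_spec _
    show (_, _) = (T₁.root, T₂.root)
    rw [h1, h2]

end Star

section Cut

variable (T : InTree V) (t : ℕ)

/-- Vertices of the cut at level `t`: vertices of height at most `t`. -/
def CutVertex := {v : V // T.height v ≤ t}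

/-- The parent map of the cut. -/
def cutParent (x : CutVertex T t) : CutVertex T t :=
  ⟨T.parent x.1, le_trans (T.height_parent_le x.1) x.2⟩

lemma cutParent_iterate (k : ℕ) (x : CutVertex T t) :
    ((cutParent T t)^[k] x).1 = T.parent^[k] x.1 := by
  induction k generalizing x with
  | zero => simp
  | succ k ih =>
      rw [Function.iterate_succ_apply, Function.iterate_succ_apply, ih]
      rfl

/-- The cut of an in-tree at level `t`: the sub-in-tree induced on vertices of height `≤ t`. -/
def cut : InTree (CutVertex T t) where
  root := ⟨T.root, by simp⟩
  parent := cutParent T t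
  parent_root := Subtype.ext T.parent_root
  reaches_root := fun x =>
    ⟨T.height x.1, Subtype.ext (by rw [cutParent_iterate]; exact T.height_spec x.1)⟩

end Cut

end InTree

section Unroll

variable {α : Type*} (f : α → α) (v : α)

/-- Vertices of the unroll of the functional graph of `f` from `v`. -/
def UnrollVertex := {ui : α × ℕ // f^[ui.2] ui.1 = v}

/-- The parent map of the unroll: `(u, i+1) ↦ (f u, i)`, fixing the root `(v, 0)`. -/
def unrollParent : UnrollVertex f v → UnrollVertex f v
  | ⟨(u, 0), h⟩ => ⟨(u, 0), h⟩
  | ⟨(u, i+1), h⟩ => ⟨(f u, i), by rw [← Function.iterate_succ_apply]; exact h⟩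

lemma unrollParent_iterate :
    ∀ (i : ℕ) (u : α) (h : f^[i] u = v),
      (unrollParent f v)^[i] ⟨(u, i), h⟩ = ⟨(v, 0), rfl⟩ := by
  intro i
  induction i with
  | zero =>
      intro u h
      have hu : u = v := by simpa using h
      subst hu
      rfl
  | succ i ih =>
      intro u h
      show (unrollParent f v)^[i] ⟨(f u, i), _⟩ = _
      exact ih (f u) _

/-- The unroll of the functional graph of `f : α → α` from the point `v`. -/
def unroll : InTree (UnrollVertex f v) where
  root := ⟨(v, 0), rfl⟩
  parent := unrollParent f v
  parent_root := rfl
  reaches_root := fun x => ⟨x.1.2, by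
    obtain ⟨⟨u, i⟩, h⟩ := x
    exact unrollParent_iterate f v i u h⟩

end Unroll

section FG

/-- The number of periodic points of `f`. -/
noncomputable def periodicCount {α : Type*} (f : α → α) : ℕ :=
  Nat.card {x : α // ∃ n, 1 ≤ n ∧ f^[n] x = x}

/-- A functional graph is connected if the equivalence relation generated by
`x ∼ f x` relates all pairs of points. -/
def FGConnected {α : Type*} (f : α → α) : Prop :=
  ∀ x y : α, Relation.EqvGen (fun u w => f u = w) x y

/-- Isomorphism of functional graphs. -/
def FGIso {α β : Type*} (f : α → α) (g : β → β) : Prop :=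
  ∃ e : α ≃ β, ∀ x, e (f x) = g (e x)

/-- The product of two functional graphs. -/
def prodMap {α γ : Type*} (f : α → α) (h : γ → γ) : α × γ → α × γ :=
  fun z => (f z.1, h z.2)

/-- `FGContains f h g` means the functional graph of `g` is (isomorphic to) a union of
connected components of the product `f × h`. -/
def FGContains {α γ β : Type*} (f : α → α) (h : γ → γ) (g : β → β) : Prop :=
  ∃ e : β → α × γ, Function.Injective e ∧ e ∘ g = prodMap f h ∘ e ∧
    ∀ z, prodMap f h z ∈ Set.range e → z ∈ Set.range e

end FG

end DDS

open DDS DDS.InTree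

namespace RSI
open DDS DDS.InTree Function

variable {V V₁ V₂ : Type*}

lemma iterate_parent_root (T : InTree V) (k : ℕ) : T.parent^[k] T.root = T.root := by
  induction k with
  | zero => rfl
  | succ k ih => rw [Function.iterate_succ_apply, T.parent_root, ih]

lemma parent_iterate_eq_root_iff (T : InTree V) (v : V) (k : ℕ) :
    T.parent^[k] v = T.root ↔ T.height v ≤ k := by
  constructor
  · intro h; exact Nat.sInf_le h
  · intro h
    have hs := T.height_spec v
    rw [show k = (k - T.height v) + T.height v by omega, Function.iterate_add_apply, hs,
      iterate_parent_root]

lemma structured_of_isomorphic {T₁ : InTree V₁} {T₂ : InTree V₂}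
    (h : Isomorphic T₁.Edge T₂.Edge) :
    ∃ e : V₁ ≃ V₂, e T₁.root = T₂.root ∧ ∀ v, e (T₁.parent v) = T₂.parent (e v) := by
  obtain ⟨e, he⟩ := h
  have hroot : e T₁.root = T₂.root := by
    by_contra hne
    have h2 : T₂.Edge (e T₁.root) (T₂.parent (e T₁.root)) := ⟨hne, rfl⟩
    have h3 := (he T₁.root (e.symm (T₂.parent (e T₁.root)))).2 (by simpa using h2)
    exact h3.1 rfl
  refine ⟨e, hroot, fun v => ?_⟩
  by_cases hv : v = T₁.root
  · subst hv; rw [T₁.parent_root, hroot, T₂.parent_root]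
  · exact ((he v (T₁.parent v)).1 ⟨hv, rfl⟩).2

section SE

variable {T₁ : InTree V₁} {T₂ : InTree V₂} {e : V₁ ≃ V₂}

lemma se_iterate (hp : ∀ v, e (T₁.parent v) = T₂.parent (e v)) (k : ℕ) (v : V₁) :
    e (T₁.parent^[k] v) = T₂.parent^[k] (e v) := by
  induction k generalizing v with
  | zero => rfl
  | succ k ih => rw [Function.iterate_succ_apply', Function.iterate_succ_apply', hp, ih]

lemma se_symm (hr : e T₁.root = T₂.root) (hp : ∀ v, e (T₁.parent v) = T₂.parent (e v)) :
    e.symm T₂.root = T₁.root ∧ ∀ w, e.symm (T₂.parent w) = T₁.parent (e.symm w) := by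
  constructor
  · rw [← hr, e.symm_apply_apply]
  · intro w
    apply e.injective
    rw [e.apply_symm_apply, hp, e.apply_symm_apply]

lemma se_height (hr : e T₁.root = T₂.root) (hp : ∀ v, e (T₁.parent v) = T₂.parent (e v))
    (v : V₁) : T₂.height (e v) = T₁.height v := by
  apply le_antisymm
  · rw [← parent_iterate_eq_root_iff, ← se_iterate hp, T₁.height_spec, hr]
  · rw [← parent_iterate_eq_root_iff]
    apply e.injective
    rw [se_iterate hp, T₂.height_spec, hr]

/-- extensibility: `v` has descendants at every distance. -/
def Ext (T : InTree V) (v : V) : Prop :=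
  ∀ n, ∃ w, T.parent^[n] w = v ∧ T.height w = T.height v + n

lemma se_ext (hr : e T₁.root = T₂.root) (hp : ∀ v, e (T₁.parent v) = T₂.parent (e v))
    {v : V₁} (hv : Ext T₁ v) : Ext T₂ (e v) := by
  intro n
  obtain ⟨w, hw, hh⟩ := hv n
  refine ⟨e w, by rw [← se_iterate hp, hw], ?_⟩
  rw [se_height hr hp, se_height hr hp, hh]

end SE

section U

variable {α : Type*} (f : α → α) (v : α)

lemma unroll_parent_iterate_le (k : ℕ) :
    ∀ (i : ℕ) (hk : k ≤ i) (u : α) (hu : f^[i] u = v),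
    (unroll f v).parent^[k] ⟨(u, i), hu⟩ =
      ⟨(f^[k] u, i - k), by
        rw [← Function.iterate_add_apply]
        rw [show i - k + k = i by omega]
        exact hu⟩ := by
  induction k with
  | zero => intro i hk u hu; rfl
  | succ k ih =>
      intro i hk u hu
      obtain ⟨j, rfl⟩ : ∃ j, i = j + 1 := ⟨i - 1, by omega⟩
      erw [Function.iterate_succ_apply]
      have hpar : (unroll f v).parent ⟨(u, j + 1), hu⟩ =
          ⟨(f u, j), by rw [← Function.iterate_succ_apply]; exact hu⟩ := rfl
      rw [hpar, ih j (by omega) (f u) _]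
      refine Subtype.ext (Prod.ext ?_ ?_)
      · show f^[k] (f u) = f^[k+1] u
        rw [Function.iterate_succ_apply]
      · show j - k = j + 1 - (k + 1)
        omega

lemma unroll_height (u : α) (i : ℕ) (hu : f^[i] u = v) :
    (unroll f v).height ⟨(u, i), hu⟩ = i := by
  apply le_antisymm
  · apply Nat.sInf_le
    show (unroll f v).parent^[i] _ = (unroll f v).root
    rw [unroll_parent_iterate_le f v i i le_rfl u hu]
    exact Subtype.ext (Prod.ext hu (by show i - i = 0; omega))
  · by_contra hlt
    push_neg at hlt
    have hs := (unroll f v).height_spec ⟨(u, i), hu⟩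
    rw [unroll_parent_iterate_le f v _ i (by omega) u hu] at hs
    have h2 : i - (unroll f v).height ⟨(u, i), hu⟩ = 0 :=
      congrArg (fun z => z.1.2) hs
    omega

lemma unroll_root_def : (unroll f v).root = ⟨(v, 0), rfl⟩ := rfl

lemma unroll_ext_iff (u : α) (i : ℕ) (hu : f^[i] u = v) :
    Ext (unroll f v) ⟨(u, i), hu⟩ ↔ ∀ n : ℕ, ∃ z, f^[n] z = u := by
  constructor
  · intro hext n
    obtain ⟨w, hw, hh⟩ := hext n
    obtain ⟨⟨z, j⟩, hz⟩ := w
    have hj : j = i + n := by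
      rw [unroll_height] at hh
      rw [unroll_height] at hh
      exact hh
    subst hj
    rw [unroll_parent_iterate_le f v n (i + n) (by omega) z hz] at hw
    refine ⟨z, ?_⟩
    have h1 : f^[n] z = u := congrArg (fun t => t.1.1) hw
    exact h1
  · intro hr
    intro n
    obtain ⟨z, hz⟩ := hr n
    refine ⟨⟨(z, i + n), by rw [Function.iterate_add_apply, hz, hu]⟩, ?_, ?_⟩
    · rw [unroll_parent_iterate_le f v n (i + n) (by omega) z _]
      apply Subtype.ext
      exact Prod.ext hz (by show i + n - n = i; omega)
    · rw [unroll_height, unroll_height]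

end U

section StarH

variable {T₁ : InTree V₁} {T₂ : InTree V₂}

lemma star_root_def : (T₁.star T₂).root = ⟨(T₁.root, T₂.root), by simp⟩ := rfl

lemma star_iterate_fst (k : ℕ) (x : StarVertex T₁ T₂) :
    ((T₁.star T₂).parent^[k] x).1 = (T₁.parent^[k] x.1.1, T₂.parent^[k] x.1.2) :=
  starParent_iterate T₁ T₂ k x

lemma star_iterate_root_iff (k : ℕ) (x : StarVertex T₁ T₂) :
    (T₁.star T₂).parent^[k] x = (T₁.star T₂).root ↔
      (T₁.parent^[k] x.1.1 = T₁.root ∧ T₂.parent^[k] x.1.2 = T₂.root) := by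
  erw [Subtype.ext_iff, star_iterate_fst, star_root_def, Prod.ext_iff]

lemma star_height (x : StarVertex T₁ T₂) :
    (T₁.star T₂).height x = T₁.height x.1.1 := by
  apply le_antisymm
  · apply Nat.sInf_le
    show (T₁.star T₂).parent^[_] x = (T₁.star T₂).root
    rw [star_iterate_root_iff]
    constructor
    · exact (parent_iterate_eq_root_iff _ _ _).2 le_rfl
    · rw [parent_iterate_eq_root_iff, ← x.2]
  · have hs := (T₁.star T₂).height_spec x
    rw [star_iterate_root_iff] at hs
    rw [← parent_iterate_eq_root_iff]
    exact hs.1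

lemma star_height' (x : StarVertex T₁ T₂) :
    (T₁.star T₂).height x = T₂.height x.1.2 := by
  rw [star_height, x.2]

lemma star_ext_iff (x : StarVertex T₁ T₂) :
    Ext (T₁.star T₂) x ↔ (Ext T₁ x.1.1 ∧ Ext T₂ x.1.2) := by
  constructor
  · intro hx
    constructor
    · intro n
      obtain ⟨w, hw, hh⟩ := hx n
      have h2 : ((T₁.star T₂).parent^[n] w).1 = x.1 := by rw [hw]
      rw [star_iterate_fst] at h2
      refine ⟨w.1.1, (Prod.ext_iff.1 h2).1, ?_⟩
      rw [← star_height, ← star_height, hh]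
    · intro n
      obtain ⟨w, hw, hh⟩ := hx n
      have h2 : ((T₁.star T₂).parent^[n] w).1 = x.1 := by rw [hw]
      rw [star_iterate_fst] at h2
      refine ⟨w.1.2, (Prod.ext_iff.1 h2).2, ?_⟩
      rw [← star_height', ← star_height', hh]
  · rintro ⟨hx1, hx2⟩ n
    obtain ⟨w₁, hw₁, hh₁⟩ := hx1 n
    obtain ⟨w₂, hw₂, hh₂⟩ := hx2 n
    refine ⟨⟨(w₁, w₂), by rw [hh₁, hh₂, x.2]⟩, ?_, ?_⟩
    · apply Subtype.ext
      erw [star_iterate_fst]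
      exact Prod.ext hw₁ hw₂
    · erw [star_height, star_height, hh₁]

end StarH

end RSI
namespace RSI
open DDS Function

section FG

variable {γ : Type*} (h : γ → γ)

/-- periodic point -/
def Per (u : γ) : Prop := ∃ n, 1 ≤ n ∧ h^[n] u = u

lemma per_iterate {u : γ} (hu : Per h u) (m : ℕ) : Per h (h^[m] u) := by
  obtain ⟨n, hn, he⟩ := hu
  refine ⟨n, hn, ?_⟩
  rw [← Function.iterate_add_apply, Nat.add_comm, Function.iterate_add_apply, he]

lemma iterate_fix_mul {u : γ} {c : ℕ} (hc : h^[c] u = u) (m : ℕ) : h^[c * m] u = u := by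
  induction m with
  | zero => simp
  | succ m ih =>
      rw [Nat.mul_succ, Function.iterate_add_apply, hc, ih]

lemma per_strip {u w : γ} {s : ℕ} {c : ℕ} (hc1 : 1 ≤ c)
    (hcu : h^[c] u = u) (hcw : h^[c] w = w)
    (hs : h^[s] u = h^[s] w) : u = w := by
  have hk : c * s - s + s = c * s := by
    have : s ≤ c * s := Nat.le_mul_of_pos_left s (by omega)
    omega
  have h1 : h^[c * s - s] (h^[s] u) = u := by
    rw [← Function.iterate_add_apply, hk, iterate_fix_mul h hcu]
  have h2 : h^[c * s - s] (h^[s] w) = w := by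
    rw [← Function.iterate_add_apply, hk, iterate_fix_mul h hcw]
  rw [← h1, hs, h2]

variable [Finite γ]

lemma pigeon (w : γ) : ∃ i ≤ Nat.card γ, Per h (h^[i] w) := by
  haveI := Fintype.ofFinite γ
  obtain ⟨i, j, hij, he⟩ := Fintype.exists_ne_map_eq_of_card_lt
    (fun n : Fin (Nat.card γ + 1) => h^[(n : ℕ)] w)
    (by rw [Nat.card_eq_fintype_card]; simp)
  rcases Nat.lt_or_ge (i : ℕ) (j : ℕ) with hlt | hge
  · refine ⟨i, by omega, ⟨(j : ℕ) - (i : ℕ), by omega, ?_⟩⟩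
    rw [← Function.iterate_add_apply]
    rw [show (j : ℕ) - (i : ℕ) + (i : ℕ) = (j : ℕ) by omega]
    exact he.symm
  · have hlt : (j : ℕ) < (i : ℕ) := by
      rcases Nat.lt_or_ge (j : ℕ) (i : ℕ) with h1 | h1
      · exact h1
      · exact absurd (Fin.ext (by omega)) hij
    refine ⟨j, by omega, ⟨(i : ℕ) - (j : ℕ), by omega, ?_⟩⟩
    rw [← Function.iterate_add_apply]
    rw [show (i : ℕ) - (j : ℕ) + (j : ℕ) = (i : ℕ) by omega]
    exact he

lemma per_of_all_ranges {u : γ} (hu : ∀ n, ∃ z, h^[n] z = u) : Per h u := by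
  obtain ⟨z, hz⟩ := hu (Nat.card γ)
  obtain ⟨i, hi, hper⟩ := pigeon h z
  have : u = h^[Nat.card γ - i] (h^[i] z) := by
    rw [← Function.iterate_add_apply, show Nat.card γ - i + i = Nat.card γ by omega, hz]
  rw [this]
  exact per_iterate h hper _

lemma per_all_ranges {u : γ} (hu : Per h u) (n : ℕ) : ∃ z, h^[n] z = u := by
  obtain ⟨m, hm, he⟩ := hu
  refine ⟨h^[m * n - n] u, ?_⟩
  rw [← Function.iterate_add_apply,
    show n + (m * n - n) = m * n by
      have : n ≤ m * n := Nat.le_mul_of_pos_left n (by omega)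
      omega]
  exact iterate_fix_mul h he n

end FG

section FGC

variable {γ : Type*} [Finite γ] {h : γ → γ} (hc : FGConnected h)

lemma eqvgen_meet {x y : γ} (hrel : Relation.EqvGen (fun u w => h u = w) x y) :
    ∃ m n, h^[m] x = h^[n] y := by
  induction hrel with
  | rel u w huw => exact ⟨1, 0, by simpa using huw⟩
  | refl u => exact ⟨0, 0, rfl⟩
  | symm u w _ ih =>
      obtain ⟨m, n, he⟩ := ih
      exact ⟨n, m, he.symm⟩
  | trans u w z _ _ ih1 ih2 =>
      obtain ⟨m₁, n₁, he₁⟩ := ih1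
      obtain ⟨m₂, n₂, he₂⟩ := ih2
      refine ⟨m₂ + m₁, n₁ + n₂, ?_⟩
      rw [Function.iterate_add_apply, he₁, ← Function.iterate_add_apply,
        Nat.add_comm, Function.iterate_add_apply, he₂, ← Function.iterate_add_apply]

include hc in
lemma exists_iter_eq {p q : γ} (hq : Per h q) : ∃ K, h^[K] p = q := by
  obtain ⟨m, n, he⟩ := eqvgen_meet (hc q p)
  obtain ⟨r, hr, hre⟩ := hq
  have hub : m ≤ r * m := Nat.le_mul_of_pos_left m (by omega)
  refine ⟨r * m - m + n, ?_⟩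
  rw [Function.iterate_add_apply, ← he, ← Function.iterate_add_apply,
    show r * m - m + m = r * m by omega]
  exact iterate_fix_mul h hre m

include hc in
lemma card_per_eq_minimalPeriod {p : γ} (hp : Per h p) :
    Nat.card {w : γ // Per h w} = Function.minimalPeriod h p := by
  obtain ⟨n, hn, he⟩ := hp
  have hmem : p ∈ Function.periodicPts h := ⟨n, by omega, he⟩
  have hrpos : 0 < Function.minimalPeriod h p :=
    Function.minimalPeriod_pos_of_mem_periodicPts hmem
  set r := Function.minimalPeriod h p with hr
  have hbij : Function.Bijective
      (fun i : Fin r => (⟨h^[(i : ℕ)] p, per_iterate h ⟨n, hn, he⟩ _⟩ : {w : γ // Per h w})) := by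
    constructor
    · rintro ⟨i, hi⟩ ⟨j, hj⟩ hij
      have heq : h^[i] p = h^[j] p := congrArg Subtype.val hij
      -- wlog i ≤ j
      have key : ∀ i j : ℕ, i < j → j < r → h^[i] p = h^[j] p → False := by
        intro i j hlt hjr heq
        have h1 : h^[r - j + i] p = p := by
          rw [Function.iterate_add_apply, heq, ← Function.iterate_add_apply,
            show r - j + j = r by omega, hr]
          exact Function.iterate_minimalPeriod
        have h2 : Function.IsPeriodicPt h (r - j + i) p := h1
        have := h2.minimalPeriod_le (by omega)
        omega
      rcases Nat.lt_trichotomy i j with h1 | h1 | h1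
      · exact absurd heq (fun he => key i j h1 hj he)
      · exact Fin.ext h1
      · exact absurd heq.symm (fun he => key j i h1 hi he)
    · rintro ⟨q, hq⟩
      obtain ⟨K, hK⟩ := exists_iter_eq hc hq
      refine ⟨⟨K % r, Nat.mod_lt _ hrpos⟩, ?_⟩
      apply Subtype.ext
      show h^[K % r] p = q
      rw [hr, Function.iterate_mod_minimalPeriod_eq, hK]
  rw [← Nat.card_eq_of_bijective _ hbij, Nat.card_eq_fintype_card, Fintype.card_fin]

include hc in
lemma per_cycle {p : γ} (hp : Per h p) :
    h^[Nat.card {w : γ // Per h w}] p = p := by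
  rw [card_per_eq_minimalPeriod hc hp]
  exact Function.iterate_minimalPeriod

include hc in
lemma per_min {p : γ} (hp : Per h p) {i : ℕ} (h1 : 0 < i)
    (h2 : i < Nat.card {w : γ // Per h w}) : h^[i] p ≠ p := by
  intro he
  have h3 : Function.IsPeriodicPt h i p := he
  have := h3.minimalPeriod_le h1
  rw [← card_per_eq_minimalPeriod hc hp] at this
  omega

include hc in
lemma card_per_pos [Nonempty γ] : 1 ≤ Nat.card {w : γ // Per h w} := by
  obtain ⟨w⟩ := (inferInstance : Nonempty γ)
  obtain ⟨i, _, hper⟩ := pigeon h w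
  rw [card_per_eq_minimalPeriod hc hper]
  obtain ⟨n, hn, he⟩ := hper
  exact Function.minimalPeriod_pos_of_mem_periodicPts ⟨n, by omega, he⟩

include hc in
lemma per_inj {p q : γ} (hp : Per h p) (hq : Per h q) {s : ℕ}
    (hs : h^[s] p = h^[s] q) [Nonempty γ] : p = q :=
  per_strip h (card_per_pos hc) (per_cycle hc hp) (per_cycle hc hq) hs

end FGC

section Dist

variable {γ : Type*} [Finite γ] (h : γ → γ)

/-- distance to the periodic part -/
noncomputable def fgdist (w : γ) : ℕ := sInf {m | Per h (h^[m] w)}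

lemma fgdist_spec (w : γ) : Per h (h^[fgdist h w] w) := by
  obtain ⟨i, _, hper⟩ := pigeon h w
  exact Nat.sInf_mem (⟨i, hper⟩ : Set.Nonempty {m | Per h (h^[m] w)})

lemma fgdist_le_card (w : γ) : fgdist h w ≤ Nat.card γ := by
  obtain ⟨i, hi, hper⟩ := pigeon h w
  exact le_trans (Nat.sInf_le hper) hi

lemma per_of_ge_fgdist {w : γ} {m : ℕ} (hm : fgdist h w ≤ m) : Per h (h^[m] w) := by
  have := fgdist_spec h w
  have h2 : h^[m] w = h^[m - fgdist h w] (h^[fgdist h w] w) := by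
    rw [← Function.iterate_add_apply, show m - fgdist h w + fgdist h w = m by omega]
  rw [h2]
  exact per_iterate h this _

lemma fgdist_eq_zero_iff {w : γ} : fgdist h w = 0 ↔ Per h w := by
  constructor
  · intro h0
    have := fgdist_spec h w
    rwa [h0] at this
  · intro hper
    exact Nat.eq_zero_of_le_zero (Nat.sInf_le (by simpa using hper))

lemma fgdist_apply {w : γ} (hw : ¬ Per h w) : fgdist h w = fgdist h (h w) + 1 := by
  have h0 : fgdist h w ≠ 0 := fun hz => hw ((fgdist_eq_zero_iff h).1 hz)
  have hmem : ∀ m, Per h (h^[m] (h w)) ↔ Per h (h^[m + 1] w) := by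
    intro m
    rw [Function.iterate_add_apply]
    simp
  have h1 : fgdist h w ≤ fgdist h (h w) + 1 := by
    apply Nat.sInf_le
    show Per h (h^[fgdist h (h w) + 1] w)
    rw [← hmem]
    exact fgdist_spec h (h w)
  have h2 : fgdist h (h w) ≤ fgdist h w - 1 := by
    apply Nat.sInf_le
    show Per h (h^[fgdist h w - 1] (h w))
    rw [hmem, show fgdist h w - 1 + 1 = fgdist h w by omega]
    exact fgdist_spec h w
  omega

end Dist

section Spine

variable {γ : Type*} [Finite γ] [Nonempty γ] {h : γ → γ} (hc : FGConnected h)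
  {x₀ : γ} (hx₀ : Per h x₀)

/-- spine points: `spt j` is the periodic point at distance `j` upstream of `x₀`. -/
noncomputable def spt (h : γ → γ) (x₀ : γ) (c : ℕ) (j : ℕ) : γ := h^[(c - 1) * j] x₀

variable (c : ℕ) (hcc : c = Nat.card {w : γ // Per h w})

include hc hx₀ hcc

lemma spt_per (j : ℕ) : Per h (spt h x₀ c j) := per_iterate h hx₀ _

lemma spt_spec (j : ℕ) : h^[j] (spt h x₀ c j) = x₀ := by
  have hc1 : 1 ≤ c := hcc ▸ card_per_pos hc
  show h^[j] (h^[(c - 1) * j] x₀) = x₀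
  rw [← Function.iterate_add_apply, show j + (c - 1) * j = c * j by
    obtain ⟨d, rfl⟩ : ∃ d, c = d + 1 := ⟨c - 1, by omega⟩
    simp only [Nat.add_sub_cancel]
    ring]
  exact iterate_fix_mul h (hcc ▸ per_cycle hc hx₀) j

lemma spt_parent (j : ℕ) : h (spt h x₀ c (j + 1)) = spt h x₀ c j := by
  have hc1 : 1 ≤ c := hcc ▸ card_per_pos hc
  show h (h^[(c - 1) * (j + 1)] x₀) = h^[(c - 1) * j] x₀
  rw [← Function.iterate_succ_apply' h ((c - 1) * (j + 1)) x₀]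
  simp only [Nat.succ_eq_add_one]
  rw [show (c - 1) * (j + 1) + 1 = (c - 1) * j + c by
      obtain ⟨d, rfl⟩ : ∃ d, c = d + 1 := ⟨c - 1, by omega⟩
      simp only [Nat.add_sub_cancel]
      ring,
    Function.iterate_add_apply, (show h^[c] x₀ = x₀ from hcc ▸ per_cycle hc hx₀)]

lemma spt_unique {u : γ} (hu : Per h u) {j : ℕ} (hj : h^[j] u = x₀) :
    u = spt h x₀ c j := by
  apply per_inj hc hu (spt_per hc hx₀ c hcc j) (s := j)
  rw [hj, spt_spec hc hx₀ c hcc]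

lemma spt_add_c (j : ℕ) : spt h x₀ c (j + c) = spt h x₀ c j := by
  have hc1 : 1 ≤ c := hcc ▸ card_per_pos hc
  apply spt_unique hc hx₀ c hcc (spt_per hc hx₀ c hcc (j + c)) (j := j)
  show h^[j] (h^[(c - 1) * (j + c)] x₀) = x₀
  rw [← Function.iterate_add_apply, show j + (c - 1) * (j + c) = c * (j + c - 1) by
    obtain ⟨d, rfl⟩ : ∃ d, c = d + 1 := ⟨c - 1, by omega⟩
    simp only [Nat.add_sub_cancel]
    have h2 : j + (d + 1) - 1 = j + d := by omega
    rw [h2]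
    ring]
  exact iterate_fix_mul h (hcc ▸ per_cycle hc hx₀) _

end Spine

end RSI
namespace RSI

universe u v w u'

structure LF : Type (u + 1) where
  V : Type u
  fin : Finite V
  lev : V → ℕ
  par : V → V
  hpar : ∀ x, lev x ≠ 0 → lev (par x) + 1 = lev x
  hfix : ∀ x, lev x = 0 → par x = x

attribute [instance] LF.fin

namespace LF

def Hom (C : LF.{u}) (X : LF.{v}) : Type (max u v) :=
  {τ : C.V → X.V // (∀ w, X.lev (τ w) = C.lev w) ∧ ∀ w, τ (C.par w) = X.par (τ w)}

instance (C : LF.{u}) (X : LF.{v}) : Finite (Hom C X) := Subtype.finite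

def Inj (C : LF.{u}) (X : LF.{v}) : Type (max u v) :=
  {τ : Hom C X // Function.Injective τ.1}

instance (C : LF.{u}) (X : LF.{v}) : Finite (Inj C X) := Subtype.finite

noncomputable def homCount (C : LF.{u}) (X : LF.{v}) : ℕ := Nat.card (Hom C X)
noncomputable def injCount (C : LF.{u}) (X : LF.{v}) : ℕ := Nat.card (Inj C X)

/-- isomorphism of levelled forests -/
def Iso (X : LF.{u}) (Y : LF.{v}) : Prop :=
  ∃ e : X.V ≃ Y.V, (∀ s, Y.lev (e s) = X.lev s) ∧ ∀ s, e (X.par s) = Y.par (e s)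

lemma Iso.refl (X : LF.{u}) : Iso X X := ⟨Equiv.refl _, fun _ => rfl, fun _ => rfl⟩

lemma Iso.symm {X : LF.{u}} {Y : LF.{v}} (h : Iso X Y) : Iso Y X := by
  obtain ⟨e, h1, h2⟩ := h
  refine ⟨e.symm, fun s => ?_, fun s => ?_⟩
  · rw [← h1 (e.symm s), e.apply_symm_apply]
  · apply e.injective; rw [e.apply_symm_apply, h2, e.apply_symm_apply]

lemma Iso.trans {X : LF.{u}} {Y : LF.{v}} {Z : LF.{w}} (h : Iso X Y) (h' : Iso Y Z) :
    Iso X Z := by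
  obtain ⟨e, h1, h2⟩ := h; obtain ⟨f, g1, g2⟩ := h'
  refine ⟨e.trans f, fun s => ?_, fun s => ?_⟩
  · rw [Equiv.trans_apply, g1, h1]
  · rw [Equiv.trans_apply, Equiv.trans_apply, h2, g2]

/-- the levelled product -/
def prod (X : LF.{u}) (Y : LF.{v}) : LF.{max u v} where
  V := {p : X.V × Y.V // X.lev p.1 = Y.lev p.2}
  fin := Subtype.finite
  lev p := X.lev p.1.1
  par p := ⟨(X.par p.1.1, Y.par p.1.2), by
    show X.lev (X.par p.1.1) = Y.lev (Y.par p.1.2)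
    by_cases hz : X.lev p.1.1 = 0
    · rw [X.hfix _ hz, Y.hfix _ (p.2 ▸ hz), p.2]
    · have h1 := X.hpar _ hz
      have h2 := Y.hpar _ (fun hy => hz (by rw [p.2, hy]))
      have h3 := p.2
      omega⟩
  hpar p hz := X.hpar _ hz
  hfix p hz := Subtype.ext (Prod.ext (X.hfix _ hz) (Y.hfix _ (p.2 ▸ hz)))

def homProdEquiv (C : LF.{w}) (X : LF.{u}) (Y : LF.{v}) :
    Hom C (prod X Y) ≃ Hom C X × Hom C Y where
  toFun τ :=
    (⟨fun s => (τ.1 s).1.1, fun s => τ.2.1 s,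
      fun s => congrArg (fun t => t.1.1) (τ.2.2 s)⟩,
     ⟨fun s => (τ.1 s).1.2, fun s => ((τ.1 s).2.symm).trans (τ.2.1 s),
      fun s => congrArg (fun t => t.1.2) (τ.2.2 s)⟩)
  invFun p :=
    ⟨fun s => ⟨(p.1.1 s, p.2.1 s), by rw [p.1.2.1, p.2.2.1]⟩,
     fun s => p.1.2.1 s,
     fun s => Subtype.ext (Prod.ext (p.1.2.2 s) (p.2.2.2 s))⟩
  left_inv τ := Subtype.ext (funext fun s => Subtype.ext rfl)
  right_inv p := Prod.ext (Subtype.ext rfl) (Subtype.ext rfl)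

lemma homCount_prod (C : LF.{w}) (X : LF.{u}) (Y : LF.{v}) :
    homCount C (prod X Y) = homCount C X * homCount C Y := by
  rw [homCount, Nat.card_congr (homProdEquiv C X Y), Nat.card_prod]; rfl

lemma homCount_congr_right (C : LF.{w}) {X : LF.{u}} {Y : LF.{v}} (h : Iso X Y) :
    homCount C X = homCount C Y := by
  obtain ⟨e, h1, h2⟩ := h
  apply Nat.card_congr
  refine ⟨fun τ => ⟨fun s => e (τ.1 s), fun s => (h1 _).trans (τ.2.1 s),
      fun s => by show e (τ.1 (C.par s)) = Y.par (e (τ.1 s)); rw [τ.2.2 s, h2]⟩,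
    fun τ => ⟨fun s => e.symm (τ.1 s), fun s => ?_, fun s => ?_⟩, fun τ => ?_, fun τ => ?_⟩
  · show X.lev (e.symm (τ.1 s)) = C.lev s
    rw [← h1 (e.symm (τ.1 s)), e.apply_symm_apply, τ.2.1 s]
  · show e.symm (τ.1 (C.par s)) = X.par (e.symm (τ.1 s))
    apply e.injective
    rw [e.apply_symm_apply, h2, e.apply_symm_apply, τ.2.2 s]
  · exact Subtype.ext (funext fun s => e.symm_apply_apply _)
  · exact Subtype.ext (funext fun s => e.apply_symm_apply _)

lemma injCount_congr_right (C : LF.{w}) {X : LF.{u}} {Y : LF.{v}} (h : Iso X Y) :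
    injCount C X = injCount C Y := by
  obtain ⟨e, h1, h2⟩ := h
  apply Nat.card_congr
  refine ⟨fun τ => ⟨⟨fun s => e (τ.1.1 s), fun s => (h1 _).trans (τ.1.2.1 s),
      fun s => by show e (τ.1.1 (C.par s)) = Y.par (e (τ.1.1 s)); rw [τ.1.2.2 s, h2]⟩,
      fun a b hab => τ.2 (e.injective hab)⟩,
    fun τ => ⟨⟨fun s => e.symm (τ.1.1 s), fun s => ?_, fun s => ?_⟩,
      fun a b hab => τ.2 (e.symm.injective hab)⟩, fun τ => ?_, fun τ => ?_⟩
  · show X.lev (e.symm (τ.1.1 s)) = C.lev s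
    rw [← h1 (e.symm (τ.1.1 s)), e.apply_symm_apply, τ.1.2.1 s]
  · show e.symm (τ.1.1 (C.par s)) = X.par (e.symm (τ.1.1 s))
    apply e.injective
    rw [e.apply_symm_apply, h2, e.apply_symm_apply, τ.1.2.2 s]
  · exact Subtype.ext (Subtype.ext (funext fun s => e.symm_apply_apply _))
  · exact Subtype.ext (Subtype.ext (funext fun s => e.apply_symm_apply _))

lemma injCount_congr_left {C : LF.{u}} {D : LF.{v}} (h : Iso C D) (X : LF.{w}) :
    injCount C X = injCount D X := by
  obtain ⟨e, h1, h2⟩ := h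
  apply Nat.card_congr
  refine ⟨fun τ => ⟨⟨fun s => τ.1.1 (e.symm s), fun s => ?_, fun s => ?_⟩,
      fun a b hab => e.symm.injective (τ.2 hab)⟩,
    fun τ => ⟨⟨fun s => τ.1.1 (e s), fun s => (τ.1.2.1 _).trans (h1 s),
      fun s => by show τ.1.1 (e (C.par s)) = X.par (τ.1.1 (e s)); rw [h2, τ.1.2.2]⟩,
      fun a b hab => e.injective (τ.2 hab)⟩,
    fun τ => ?_, fun τ => ?_⟩
  · show X.lev (τ.1.1 (e.symm s)) = D.lev s
    rw [τ.1.2.1, ← h1 (e.symm s), e.apply_symm_apply]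
  · show τ.1.1 (e.symm (D.par s)) = X.par (τ.1.1 (e.symm s))
    rw [show D.par s = e (C.par (e.symm s)) by rw [h2, e.apply_symm_apply],
      e.symm_apply_apply, τ.1.2.2]
  · exact Subtype.ext (Subtype.ext (funext fun s => by simp))
  · exact Subtype.ext (Subtype.ext (funext fun s => by simp))

lemma homCount_pos (C : LF.{u}) (X : LF.{v}) (L : ℕ) (hC : ∀ s, C.lev s ≤ L)
    (sp : ℕ → X.V) (hsl : ∀ j, j ≤ L → X.lev (sp j) = j)
    (hsp : ∀ j, j + 1 ≤ L → X.par (sp (j + 1)) = sp j) :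
    1 ≤ homCount C X := by
  have hom : Hom C X := by
    refine ⟨fun s => sp (C.lev s), fun s => hsl _ (hC s), fun s => ?_⟩
    show sp (C.lev (C.par s)) = X.par (sp (C.lev s))
    by_cases hz : C.lev s = 0
    · rw [C.hfix _ hz, hz]
      exact (X.hfix _ (hsl 0 (by omega))).symm
    · have h1 := C.hpar s hz
      have hL := hC s
      have hlev : C.lev (C.par s) = C.lev s - 1 := by omega
      rw [hlev]
      have h2 := hsp (C.lev s - 1) (by omega)
      rw [show C.lev s - 1 + 1 = C.lev s by omega] at h2
      exact h2.symm
  exact Nat.card_pos_iff.2 ⟨⟨hom⟩, inferInstance⟩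

lemma homCount_zero (C : LF.{u}) (X : LF.{v}) {s : C.V} (hs : ∀ t : X.V, X.lev t ≠ C.lev s) :
    homCount C X = 0 := by
  have : IsEmpty (Hom C X) := ⟨fun τ => hs (τ.1 s) (τ.2.1 s)⟩
  simp [homCount, Nat.card_eq_zero]

lemma exists_small (X : LF.{u}) : ∃ X₀ : LF.{0}, Iso X₀ X := by
  obtain ⟨n, ⟨e⟩⟩ := Finite.exists_equiv_fin X.V
  refine ⟨⟨Fin n, inferInstance, X.lev ∘ e.symm, fun i => e (X.par (e.symm i)),
    fun i hz => ?_, fun i hz => ?_⟩, e.symm, fun i => rfl, fun i => ?_⟩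
  · show X.lev (e.symm (e (X.par (e.symm i)))) + 1 = X.lev (e.symm i)
    rw [e.symm_apply_apply]
    exact X.hpar _ hz
  · show e (X.par (e.symm i)) = i
    rw [X.hfix _ hz, e.apply_symm_apply]
  · show e.symm (e (X.par (e.symm i))) = X.par (e.symm i)
    rw [e.symm_apply_apply]

section Factor

variable (C : LF.{u}) (X : LF.{v})

def CompatRel : Type u :=
  {r : C.V → C.V → Prop // (∀ a, r a a) ∧ (∀ a b, r a b → r b a) ∧
    (∀ a b c, r a b → r b c → r a c) ∧
    (∀ a b, r a b → C.lev a = C.lev b) ∧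
    (∀ a b, r a b → r (C.par a) (C.par b))}

instance : Finite (CompatRel C) := Subtype.finite

def rsetoid (r : CompatRel C) : Setoid C.V :=
  ⟨fun a b => r.1 a b,
   ⟨fun a => r.2.1 a, fun h => r.2.2.1 _ _ h, fun h h' => r.2.2.2.1 _ _ _ h h'⟩⟩

def quotLF (r : CompatRel C) : LF.{u} where
  V := Quotient (rsetoid C r)
  fin := Quotient.finite _
  lev := Quotient.lift C.lev fun a b hab => r.2.2.2.2.1 a b hab
  par := Quotient.map C.par fun a b hab => r.2.2.2.2.2 a b hab
  hpar := by
    intro q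
    induction q using Quotient.ind
    exact fun hz => C.hpar _ hz
  hfix := by
    intro q
    induction q using Quotient.ind
    intro hz
    exact congrArg (Quotient.mk _) (C.hfix _ hz)

noncomputable def unfactor : (Σ r : CompatRel C, Inj (quotLF C r) X) → Hom C X :=
  fun p => ⟨fun s => p.2.1.1 (Quotient.mk _ s),
    fun s => p.2.1.2.1 _,
    fun s => p.2.1.2.2 (Quotient.mk _ s)⟩

lemma unfactor_bijective : Function.Bijective (unfactor C X) := by
  constructor
  · rintro ⟨r, ι⟩ ⟨r', ι'⟩ hp
    have hw : ∀ s, ι.1.1 (Quotient.mk _ s) = ι'.1.1 (Quotient.mk _ s) :=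
      fun s => congrFun (congrArg Subtype.val hp) s
    have hr : r = r' := by
      apply Subtype.ext
      funext a b
      apply propext
      constructor
      · intro hab
        have h1 : ι.1.1 (Quotient.mk _ a) = ι.1.1 (Quotient.mk _ b) :=
          congrArg ι.1.1 (Quotient.sound hab)
        rw [hw a, hw b] at h1
        exact Quotient.exact (ι'.2 h1)
      · intro hab
        have h1 : ι'.1.1 (Quotient.mk _ a) = ι'.1.1 (Quotient.mk _ b) :=
          congrArg ι'.1.1 (Quotient.sound hab)
        rw [← hw a, ← hw b] at h1
        exact Quotient.exact (ι.2 h1)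
    subst hr
    apply congrArg (Sigma.mk r)
    apply Subtype.ext
    apply Subtype.ext
    funext q
    induction q using Quotient.ind
    exact hw _
  · intro τ
    refine ⟨⟨⟨fun a b => τ.1 a = τ.1 b,
      fun a => rfl,
      fun a b hab => hab.symm,
      fun a b c hab hbc => hab.trans hbc,
      fun a b hab => by rw [← τ.2.1 a, ← τ.2.1 b, hab],
      fun a b hab => by show τ.1 (C.par a) = τ.1 (C.par b); rw [τ.2.2 a, τ.2.2 b, hab]⟩,
      ⟨⟨Quotient.lift τ.1 (fun a b hab => hab), ?_, ?_⟩, ?_⟩⟩, ?_⟩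
    · intro q; induction q using Quotient.ind; exact τ.2.1 _
    · intro q; induction q using Quotient.ind; exact τ.2.2 _
    · intro q1 q2
      induction q1 using Quotient.ind
      induction q2 using Quotient.ind
      intro h12
      exact Quotient.sound h12
    · exact Subtype.ext (funext fun s => rfl)

end Factor

/-- the bottom (diagonal) compatible relation -/
def botRel (C : LF.{u}) : CompatRel C :=
  ⟨fun a b => a = b,
    fun a => rfl,
    fun a b hab => hab.symm,
    fun a b c hab hbc => hab.trans hbc,
    fun a b hab => congrArg C.lev hab,
    fun a b hab => congrArg C.par hab⟩

lemma quot_bot_iso (C : LF.{u}) : Iso (quotLF C (botRel C)) C := by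
  have hinj : Function.Injective (fun a : C.V => Quotient.mk (rsetoid C (botRel C)) a) :=
    fun a b hab => Quotient.exact hab
  have hsurj : Function.Surjective (fun a : C.V => Quotient.mk (rsetoid C (botRel C)) a) :=
    fun q => Quotient.exists_rep q
  exact Iso.symm ⟨Equiv.ofBijective _ ⟨hinj, hsurj⟩, fun s => rfl, fun s => rfl⟩

lemma card_quot_lt (C : LF.{u}) (r : CompatRel C) (hr : r ≠ botRel C) :
    Nat.card (quotLF C r).V < Nat.card C.V := by
  have hex : ∃ a b : C.V, r.1 a b ∧ a ≠ b := by
    by_contra hno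
    push_neg at hno
    apply hr
    apply Subtype.ext
    funext a b
    apply propext
    constructor
    · intro hab
      exact hno a b hab
    · intro hab
      subst hab
      exact r.2.1 a
  obtain ⟨a, b, hab, hne⟩ := hex
  have hsurj : Function.Surjective (fun a : C.V => Quotient.mk (rsetoid C r) a) :=
    fun q => Quotient.exists_rep q
  have hle : Nat.card (quotLF C r).V ≤ Nat.card C.V := by
    haveI := Fintype.ofFinite C.V
    haveI := Fintype.ofFinite (quotLF C r).V
    rw [Nat.card_eq_fintype_card, Nat.card_eq_fintype_card]
    exact Fintype.card_le_of_surjective _ hsurj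
  rcases Nat.lt_or_ge (Nat.card (quotLF C r).V) (Nat.card C.V) with h | h
  · exact h
  · exfalso
    have hcard : Nat.card C.V = Nat.card (quotLF C r).V := by omega
    have hbij : Function.Bijective (fun a : C.V => Quotient.mk (rsetoid C r) a) :=
      (Nat.bijective_iff_surjective_and_card _).2 ⟨hsurj, hcard⟩
    exact hne (hbij.1 (Quotient.sound hab))

lemma inj_eq_of_hom_eq {X Y : LF.{v}}
    (hXY : ∀ C : LF.{u}, homCount C X = homCount C Y) :
    ∀ C : LF.{u}, injCount C X = injCount C Y := by
  suffices H : ∀ n, ∀ C : LF.{u}, Nat.card C.V ≤ n → injCount C X = injCount C Y by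
    exact fun C => H (Nat.card C.V) C le_rfl
  intro n
  induction n using Nat.strong_induction_on with
  | _ n ih =>
    intro C hC
    haveI : DecidableEq (CompatRel C) := Classical.decEq _
    haveI : Fintype (CompatRel C) := Fintype.ofFinite _
    haveI : ∀ r : CompatRel C, Fintype ((quotLF C r).Inj X) := fun r => Fintype.ofFinite _
    haveI : ∀ r : CompatRel C, Fintype ((quotLF C r).Inj Y) := fun r => Fintype.ofFinite _
    have hfacX : homCount C X =
        (∑ r ∈ (Finset.univ.erase (botRel C)), injCount (quotLF C r) X) + injCount C X := by
      rw [homCount, ← Nat.card_eq_of_bijective _ (unfactor_bijective C X),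
        Nat.card_eq_fintype_card, Fintype.card_sigma,
        ← Finset.sum_erase_add Finset.univ _ (Finset.mem_univ (botRel C))]
      congr 1
      · apply Finset.sum_congr rfl
        intro r _
        rw [injCount, Nat.card_eq_fintype_card]
      · rw [← injCount_congr_left (quot_bot_iso C) X, injCount, Nat.card_eq_fintype_card]
    have hfacY : homCount C Y =
        (∑ r ∈ (Finset.univ.erase (botRel C)), injCount (quotLF C r) Y) + injCount C Y := by
      rw [homCount, ← Nat.card_eq_of_bijective _ (unfactor_bijective C Y),
        Nat.card_eq_fintype_card, Fintype.card_sigma,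
        ← Finset.sum_erase_add Finset.univ _ (Finset.mem_univ (botRel C))]
      congr 1
      · apply Finset.sum_congr rfl
        intro r _
        rw [injCount, Nat.card_eq_fintype_card]
      · rw [← injCount_congr_left (quot_bot_iso C) Y, injCount, Nat.card_eq_fintype_card]
    have hsum : (∑ r ∈ (Finset.univ.erase (botRel C)), injCount (quotLF C r) X)
        = ∑ r ∈ (Finset.univ.erase (botRel C)), injCount (quotLF C r) Y := by
      apply Finset.sum_congr rfl
      intro r hrmem
      have hrne : r ≠ botRel C := Finset.ne_of_mem_erase hrmem
      have hlt := card_quot_lt C r hrne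
      exact ih (Nat.card (quotLF C r).V) (by omega) (quotLF C r) le_rfl
    have := hXY C
    omega

/-- cancellation, small universe -/
lemma cancel_small (A X Y : LF.{0}) (L : ℕ)
    (hXL : ∀ s, X.lev s ≤ L) (hYL : ∀ s, Y.lev s ≤ L)
    (sp : ℕ → A.V) (hsl : ∀ j, j ≤ L → A.lev (sp j) = j)
    (hsp : ∀ j, j + 1 ≤ L → A.par (sp (j + 1)) = sp j)
    (hiso : Iso (prod A X) (prod A Y)) : Iso X Y := by
  have hhom : ∀ C : LF.{0}, homCount C X = homCount C Y := by
    intro C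
    by_cases hbig : ∃ s : C.V, L < C.lev s
    · obtain ⟨s, hs⟩ := hbig
      rw [homCount_zero C X (s := s) (fun t => by have := hXL t; omega),
        homCount_zero C Y (s := s) (fun t => by have := hYL t; omega)]
    · push_neg at hbig
      have hA : 1 ≤ homCount C A := homCount_pos C A L hbig sp hsl hsp
      have hpe : homCount C A * homCount C X = homCount C A * homCount C Y := by
        rw [← homCount_prod, ← homCount_prod]
        exact homCount_congr_right C hiso
      exact Nat.eq_of_mul_eq_mul_left (by omega) hpe
  have hinj := inj_eq_of_hom_eq hhom
  have hXX : 0 < injCount X X := by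
    apply Nat.card_pos_iff.2
    exact ⟨⟨⟨⟨id, fun s => rfl, fun s => rfl⟩, fun a b hab => hab⟩⟩, inferInstance⟩
  have hYY : 0 < injCount Y Y := by
    apply Nat.card_pos_iff.2
    exact ⟨⟨⟨⟨id, fun s => rfl, fun s => rfl⟩, fun a b hab => hab⟩⟩, inferInstance⟩
  have hXY : 0 < injCount X Y := by rw [← hinj X]; exact hXX
  have hYX : 0 < injCount Y X := by rw [hinj Y]; exact hYY
  obtain ⟨i⟩ := (Nat.card_pos_iff.1 hXY).1
  obtain ⟨j⟩ := (Nat.card_pos_iff.1 hYX).1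
  have hcard : Nat.card X.V = Nat.card Y.V :=
    le_antisymm (Nat.card_le_card_of_injective i.1.1 i.2)
      (Nat.card_le_card_of_injective j.1.1 j.2)
  have hbij : Function.Bijective i.1.1 :=
    (Nat.bijective_iff_injective_and_card _).2 ⟨i.2, hcard⟩
  exact ⟨Equiv.ofBijective _ hbij, fun s => i.1.2.1 s, fun s => i.1.2.2 s⟩

lemma prod_congr {A : LF.{u}} {A' : LF.{v}} {X : LF.{w}} {X' : LF.{u'}}
    (hA : Iso A A') (hX : Iso X X') : Iso (prod A X) (prod A' X') := by
  obtain ⟨e, he1, he2⟩ := hA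
  obtain ⟨f, hf1, hf2⟩ := hX
  refine ⟨Equiv.subtypeEquiv (Equiv.prodCongr e f) ?_, fun s => ?_, fun s => ?_⟩
  · intro p
    show A.lev p.1 = X.lev p.2 ↔ A'.lev (e p.1) = X'.lev (f p.2)
    rw [he1, hf1]
  · exact he1 _
  · apply Subtype.ext
    exact Prod.ext (he2 _) (hf2 _)

/-- cancellation, general universes -/
lemma cancel {A : LF.{u}} {X : LF.{v}} {Y : LF.{w}} (L : ℕ)
    (hXL : ∀ s, X.lev s ≤ L) (hYL : ∀ s, Y.lev s ≤ L)
    (sp : ℕ → A.V) (hsl : ∀ j, j ≤ L → A.lev (sp j) = j)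
    (hsp : ∀ j, j + 1 ≤ L → A.par (sp (j + 1)) = sp j)
    (hiso : Iso (prod A X) (prod A Y)) : Iso X Y := by
  obtain ⟨A₀, ⟨eA, heA1, heA2⟩⟩ := exists_small A
  obtain ⟨X₀, hX₀⟩ := exists_small X
  obtain ⟨Y₀, hY₀⟩ := exists_small Y
  have hiso₀ : Iso (prod A₀ X₀) (prod A₀ Y₀) :=
    ((prod_congr ⟨eA, heA1, heA2⟩ hX₀).trans hiso).trans
      (Iso.symm (prod_congr ⟨eA, heA1, heA2⟩ hY₀))
  have hXL₀ : ∀ s, X₀.lev s ≤ L := by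
    obtain ⟨f, hf1, hf2⟩ := hX₀
    intro s
    rw [← hf1 s]
    exact hXL _
  have hYL₀ : ∀ s, Y₀.lev s ≤ L := by
    obtain ⟨f, hf1, hf2⟩ := hY₀
    intro s
    rw [← hf1 s]
    exact hYL _
  have hiso01 : Iso X₀ Y₀ := by
    apply cancel_small A₀ X₀ Y₀ L hXL₀ hYL₀ (fun j => eA.symm (sp j))
    · intro j hj
      have h' := heA1 (eA.symm (sp j))
      rw [eA.apply_symm_apply] at h'
      exact h'.symm.trans (hsl j hj)
    · intro j hj
      apply eA.injective
      rw [heA2, eA.apply_symm_apply, eA.apply_symm_apply]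
      exact hsp j hj
    · exact hiso₀
  exact ((Iso.symm hX₀).trans hiso01).trans hY₀

end LF

end RSI
namespace RSI
open DDS DDS.InTree Function

section Bridge

variable {V V₁ V₂ : Type*}

lemma unroll_height' {α : Type*} {f : α → α} {v : α} (x : UnrollVertex f v) :
    (unroll f v).height x = x.1.2 :=
  unroll_height f v x.1.1 x.1.2 x.2

lemma unroll_parent_pos {α : Type*} (f : α → α) (v : α) (u : α) (m : ℕ) (hm : m ≠ 0)
    (hu : f^[m] u = v) :
    (unroll f v).parent ⟨(u, m), hu⟩ =
      ⟨(f u, m - 1), by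
        have h2 : m - 1 + 1 = m := by omega
        rw [← h2, Function.iterate_succ_apply] at hu
        exact hu⟩ := by
  obtain ⟨m', rfl⟩ : ∃ m', m = m' + 1 := ⟨m - 1, by omega⟩
  rfl

instance fin_unroll_cut {α : Type*} [Finite α] (f : α → α) (v : α) (t : ℕ) :
    Finite {w : UnrollVertex f v // (unroll f v).height w ≤ t} := by
  apply Finite.of_injective
    (fun w => ((w.1.1.1, ⟨w.1.1.2, by
      have := unroll_height' w.1
      omega⟩) : α × Fin (t + 1)))
  rintro ⟨⟨⟨u, i⟩, hu⟩, hi⟩ ⟨⟨⟨u', i'⟩, hu'⟩, hi'⟩ hw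
  have h1 : u = u' := congrArg Prod.fst hw
  have h2 : i = i' := congrArg (fun z => (z.2 : ℕ)) hw
  subst h1; subst h2
  rfl

instance fin_star_cut {T₁ : InTree V₁} {T₂ : InTree V₂} (t : ℕ)
    [h1 : Finite {w : V₁ // T₁.height w ≤ t}] [h2 : Finite {w : V₂ // T₂.height w ≤ t}] :
    Finite {w : StarVertex T₁ T₂ // (T₁.star T₂).height w ≤ t} := by
  apply Finite.of_injective (fun w =>
    ((⟨w.1.1.1, by rw [← star_height]; exact w.2⟩ : {w : V₁ // T₁.height w ≤ t}),
     (⟨w.1.1.2, by rw [← star_height']; exact w.2⟩ : {w : V₂ // T₂.height w ≤ t})))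
  rintro ⟨⟨⟨v1, v2⟩, hv⟩, ht⟩ ⟨⟨⟨w1, w2⟩, hw⟩, ht'⟩ he
  have h1 : v1 = w1 := congrArg (fun z => z.1.1) he
  have h2 : v2 = w2 := congrArg (fun z => z.2.1) he
  subst h1; subst h2
  rfl

/-- the cut of an in-tree at level `t`, as a levelled forest -/
noncomputable def treeLF (T : InTree V) (t : ℕ)
    [hfin : Finite {v : V // T.height v ≤ t}] : LF where
  V := {v : V // T.height v ≤ t}
  fin := hfin
  lev v := T.height v.1
  par v := ⟨T.parent v.1, le_trans (T.height_parent_le v.1) v.2⟩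
  hpar := by
    rintro ⟨v, hv⟩ hz
    have hvr : v ≠ T.root := fun hr => hz (by show T.height v = 0; rw [hr]; exact T.height_root)
    have := T.height_parent hvr
    show T.height (T.parent v) + 1 = T.height v
    omega
  hfix := by
    rintro ⟨v, hv⟩ hz
    apply Subtype.ext
    show T.parent v = v
    have hvr : v = T.root := T.height_eq_zero_iff.1 hz
    subst hvr
    exact T.parent_root

lemma treeLF_lev {T : InTree V} {t : ℕ} [Finite {v : V // T.height v ≤ t}]
    (v : (treeLF T t).V) : (treeLF T t).lev v = T.height v.1 := rfl

lemma treeLF_par_iterate {T : InTree V} {t : ℕ} [Finite {v : V // T.height v ≤ t}]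
    (k : ℕ) (v : (treeLF T t).V) : ((treeLF T t).par^[k] v).1 = T.parent^[k] v.1 := by
  induction k generalizing v with
  | zero => rfl
  | succ k ih =>
      rw [Function.iterate_succ_apply, Function.iterate_succ_apply]
      exact ih _

/-- a structured isomorphism of in-trees restricts to cut forests -/
lemma treeLF_iso {T₁ : InTree V₁} {T₂ : InTree V₂} {e : V₁ ≃ V₂}
    (hr : e T₁.root = T₂.root) (hp : ∀ v, e (T₁.parent v) = T₂.parent (e v)) (t : ℕ)
    [Finite {v : V₁ // T₁.height v ≤ t}] [Finite {v : V₂ // T₂.height v ≤ t}] :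
    LF.Iso (treeLF T₁ t) (treeLF T₂ t) := by
  refine ⟨Equiv.subtypeEquiv e (fun v => by rw [se_height hr hp]), fun v => ?_, fun v => ?_⟩
  · show T₂.height (e v.1) = T₁.height v.1
    rw [se_height hr hp]
  · apply Subtype.ext
    show e (T₁.parent v.1) = T₂.parent (e v.1)
    exact hp v.1

/-- the cut of a star is the product of the cuts -/
lemma star_treeLF_iso (T₁ : InTree V₁) (T₂ : InTree V₂) (t : ℕ)
    [Finite {v : V₁ // T₁.height v ≤ t}] [Finite {v : V₂ // T₂.height v ≤ t}] :
    LF.Iso (treeLF (T₁.star T₂) t) (LF.prod (treeLF T₁ t) (treeLF T₂ t)) := by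
  refine ⟨⟨fun w => ⟨(⟨w.1.1.1, by rw [← star_height]; exact w.2⟩,
      ⟨w.1.1.2, by rw [← star_height']; exact w.2⟩), w.1.2⟩,
    fun p => ⟨⟨(p.1.1.1, p.1.2.1), p.2⟩, by
      rw [show (T₁.star T₂).height ⟨(p.1.1.1, p.1.2.1), p.2⟩ = T₁.height p.1.1.1
        from star_height _]
      exact p.1.1.2⟩,
    fun w => ?_, fun p => ?_⟩, fun w => ?_, fun w => ?_⟩
  · apply Subtype.ext
    apply Subtype.ext
    rfl
  · rfl
  · show T₁.height w.1.1.1 = (T₁.star T₂).height w.1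
    rw [star_height]
  · apply Subtype.ext
    apply Prod.ext
    · apply Subtype.ext
      rfl
    · apply Subtype.ext
      rfl

lemma lf_iterate {X Y : LF} {e : X.V ≃ Y.V} (hp : ∀ v, e (X.par v) = Y.par (e v))
    (k : ℕ) (v : X.V) : e (X.par^[k] v) = Y.par^[k] (e v) := by
  induction k generalizing v with
  | zero => rfl
  | succ k ih => rw [Function.iterate_succ_apply', Function.iterate_succ_apply', hp, ih]

end Bridge

end RSI
namespace RSI
open DDS DDS.InTree Function

section Shift

variable {α β γ : Type*}

/-- lift an unroll vertex along a shift of the base point -/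
def liftU (g : β → β) {b b' : β} {s : ℕ} (hsb : g^[s] b' = b) (q : UnrollVertex g b') :
    UnrollVertex g b :=
  ⟨(q.1.1, q.1.2 + s), by
    rw [Nat.add_comm, Function.iterate_add_apply, q.2, hsb]⟩

lemma liftU_fst (g : β → β) {b b' : β} {s : ℕ} (hsb : g^[s] b' = b) (q : UnrollVertex g b') :
    (liftU g hsb q).1.1 = q.1.1 := rfl

lemma liftU_snd (g : β → β) {b b' : β} {s : ℕ} (hsb : g^[s] b' = b) (q : UnrollVertex g b') :
    (liftU g hsb q).1.2 = q.1.2 + s := rfl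

/-- lift a star vertex along shifts of the base points -/
def liftS (f : α → α) (h : γ → γ) {a a' : α} {x x' : γ} {s : ℕ}
    (hsa : f^[s] a' = a) (hsx : h^[s] x' = x)
    (p : StarVertex (unroll f a') (unroll h x')) : StarVertex (unroll f a) (unroll h x) :=
  ⟨(liftU f hsa p.1.1, liftU h hsx p.1.2), by
    rw [unroll_height' (liftU f hsa p.1.1), unroll_height' (liftU h hsx p.1.2),
      liftU_snd, liftU_snd]
    have h2 := p.2
    rw [unroll_height' p.1.1, unroll_height' p.1.2] at h2
    omega⟩

lemma shift_structured [Finite α] [Finite β] [Finite γ]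
    [Nonempty α] [Nonempty β] [Nonempty γ]
    {f : α → α} {h : γ → γ} {g : β → β}
    (hgc : FGConnected g)
    {a : α} {x : γ} {b : β}
    {e : StarVertex (unroll f a) (unroll h x) ≃ UnrollVertex g b}
    (hr : e ((unroll f a).star (unroll h x)).root = (unroll g b).root)
    (hp : ∀ v, e (((unroll f a).star (unroll h x)).parent v) = (unroll g b).parent (e v))
    {s : ℕ} {a' : α} {x' : γ} {b' : β}
    (ha' : Per f a') (hsa : f^[s] a' = a)
    (hx' : Per h x') (hsx : h^[s] x' = x)
    (hb' : Per g b') (hsb : g^[s] b' = b) :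
    ∃ e' : StarVertex (unroll f a') (unroll h x') ≃ UnrollVertex g b',
      e' ((unroll f a').star (unroll h x')).root = (unroll g b').root ∧
      ∀ v, e' (((unroll f a').star (unroll h x')).parent v) = (unroll g b').parent (e' v) := by
  obtain ⟨hr2, hp2⟩ := se_symm hr hp
  -- K1 : e (liftS f h hsa hsx ((unroll f a').star (unroll h x')).root) = (liftU g hsb (unroll g b').root)
  have K1 : e (liftS f h hsa hsx ((unroll f a').star (unroll h x')).root) = (liftU g hsb (unroll g b').root) := by
    have hext : Ext ((unroll f a).star (unroll h x)) (liftS f h hsa hsx ((unroll f a').star (unroll h x')).root) := by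
      rw [star_ext_iff]
      constructor
      · exact (unroll_ext_iff f a a' (0 + s) (liftS f h hsa hsx ((unroll f a').star (unroll h x')).root).1.1.2).2 (fun n => per_all_ranges f ha' n)
      · exact (unroll_ext_iff h x x' (0 + s) (liftS f h hsa hsx ((unroll f a').star (unroll h x')).root).1.2.2).2 (fun n => per_all_ranges h hx' n)
    have hext2 : Ext (unroll g b) (e (liftS f h hsa hsx ((unroll f a').star (unroll h x')).root)) := se_ext hr hp hext
    have hht : (unroll g b).height (e (liftS f h hsa hsx ((unroll f a').star (unroll h x')).root)) = 0 + s := by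
      rw [se_height hr hp, star_height (liftS f h hsa hsx ((unroll f a').star (unroll h x')).root), unroll_height' (liftS f h hsa hsx ((unroll f a').star (unroll h x')).root).1.1]
      rfl
    have hq2 : (e (liftS f h hsa hsx ((unroll f a').star (unroll h x')).root)).1.2 = 0 + s := by rw [← unroll_height' (e (liftS f h hsa hsx ((unroll f a').star (unroll h x')).root)), hht]
    have hper : Per g (e (liftS f h hsa hsx ((unroll f a').star (unroll h x')).root)).1.1 := by
      apply per_of_all_ranges
      intro n
      exact (unroll_ext_iff g b (e (liftS f h hsa hsx ((unroll f a').star (unroll h x')).root)).1.1 (e (liftS f h hsa hsx ((unroll f a').star (unroll h x')).root)).1.2 (e (liftS f h hsa hsx ((unroll f a').star (unroll h x')).root)).2).1 hext2 n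
    have hgs : g^[(e (liftS f h hsa hsx ((unroll f a').star (unroll h x')).root)).1.2] (e (liftS f h hsa hsx ((unroll f a').star (unroll h x')).root)).1.1 = b := (e (liftS f h hsa hsx ((unroll f a').star (unroll h x')).root)).2
    rw [hq2] at hgs
    have hfst : (e (liftS f h hsa hsx ((unroll f a').star (unroll h x')).root)).1.1 = b' := by
      apply per_inj hgc hper hb' (s := 0 + s)
      rw [hgs, Nat.zero_add, hsb]
    exact Subtype.ext (Prod.ext hfst hq2)
  have K1' : e.symm (liftU g hsb (unroll g b').root) = (liftS f h hsa hsx ((unroll f a').star (unroll h x')).root) := by rw [← K1, e.symm_apply_apply]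
  -- forward data
  have hsnd : ∀ p : StarVertex (unroll f a') (unroll h x'),
      (e (liftS f h hsa hsx p)).1.2 = p.1.1.1.2 + s := by
    intro p
    rw [← unroll_height' (e (liftS f h hsa hsx p)), se_height hr hp,
      star_height (liftS f h hsa hsx p), unroll_height' (liftS f h hsa hsx p).1.1]
    rfl
  have hsndR : ∀ p : StarVertex (unroll f a') (unroll h x'),
      p.1.2.1.2 = p.1.1.1.2 := by
    intro p
    have h2 := p.2
    rw [unroll_height' p.1.1, unroll_height' p.1.2] at h2
    omega
  have hiter : ∀ p : StarVertex (unroll f a') (unroll h x'),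
      (unroll g b).parent^[p.1.1.1.2] (e (liftS f h hsa hsx p)) = (liftU g hsb (unroll g b').root) := by
    intro p
    have hparP : ((unroll f a).star (unroll h x)).parent^[p.1.1.1.2]
        (liftS f h hsa hsx p) = (liftS f h hsa hsx ((unroll f a').star (unroll h x')).root) := by
      apply Subtype.ext
      rw [star_iterate_fst]
      apply Prod.ext
      · show (unroll f a).parent^[p.1.1.1.2] (liftU f hsa p.1.1) = (liftS f h hsa hsx ((unroll f a').star (unroll h x')).root).1.1
        rw [show liftU f hsa p.1.1 =
            ⟨(p.1.1.1.1, p.1.1.1.2 + s), (liftU f hsa p.1.1).2⟩ from rfl]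
        erw [unroll_parent_iterate_le f a p.1.1.1.2 (p.1.1.1.2 + s) (by omega) p.1.1.1.1 _]
        apply Subtype.ext
        apply Prod.ext
        · exact p.1.1.2
        · show p.1.1.1.2 + s - p.1.1.1.2 = 0 + s
          omega
      · show (unroll h x).parent^[p.1.1.1.2] (liftU h hsx p.1.2) = (liftS f h hsa hsx ((unroll f a').star (unroll h x')).root).1.2
        have hsnd2 := hsndR p
        rw [show liftU h hsx p.1.2 =
            ⟨(p.1.2.1.1, p.1.2.1.2 + s), (liftU h hsx p.1.2).2⟩ from rfl]
        erw [unroll_parent_iterate_le h x p.1.1.1.2 (p.1.2.1.2 + s) (by omega) p.1.2.1.1 _]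
        apply Subtype.ext
        apply Prod.ext
        · show h^[p.1.1.1.2] p.1.2.1.1 = x'
          rw [← hsnd2]
          exact p.1.2.2
        · show p.1.2.1.2 + s - p.1.1.1.2 = 0 + s
          omega
    rw [← se_iterate hp, hparP, K1]
  have hfst : ∀ p : StarVertex (unroll f a') (unroll h x'),
      g^[p.1.1.1.2] (e (liftS f h hsa hsx p)).1.1 = b' := by
    intro p
    have h1 := hiter p
    have h2 : (unroll g b).parent^[p.1.1.1.2] (e (liftS f h hsa hsx p)) =
        ⟨(g^[p.1.1.1.2] (e (liftS f h hsa hsx p)).1.1,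
          (e (liftS f h hsa hsx p)).1.2 - p.1.1.1.2), _⟩ :=
      unroll_parent_iterate_le g b p.1.1.1.2 (e (liftS f h hsa hsx p)).1.2
        (by rw [hsnd p]; omega) (e (liftS f h hsa hsx p)).1.1 (e (liftS f h hsa hsx p)).2
    have h3 := h2.symm.trans h1
    exact congrArg (fun z => z.1.1) h3
  -- backward data
  have hP1 : ∀ q : UnrollVertex g b',
      (e.symm (liftU g hsb q)).1.1.1.2 = q.1.2 + s := by
    intro q
    rw [← unroll_height' (e.symm (liftU g hsb q)).1.1, ← star_height,
      se_height hr2 hp2, unroll_height' (liftU g hsb q)]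
    rfl
  have hP2 : ∀ q : UnrollVertex g b',
      (e.symm (liftU g hsb q)).1.2.1.2 = q.1.2 + s := by
    intro q
    rw [← unroll_height' (e.symm (liftU g hsb q)).1.2, ← star_height',
      se_height hr2 hp2, unroll_height' (liftU g hsb q)]
    rfl
  have hiter' : ∀ q : UnrollVertex g b',
      ((unroll f a).star (unroll h x)).parent^[q.1.2] (e.symm (liftU g hsb q)) = (liftS f h hsa hsx ((unroll f a').star (unroll h x')).root) := by
    intro q
    have hq : (unroll g b).parent^[q.1.2] (liftU g hsb q) = (liftU g hsb (unroll g b').root) := by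
      rw [show liftU g hsb q = ⟨(q.1.1, q.1.2 + s), (liftU g hsb q).2⟩ from rfl]
      erw [unroll_parent_iterate_le g b q.1.2 (q.1.2 + s) (by omega) q.1.1 _]
      apply Subtype.ext
      apply Prod.ext
      · exact q.2
      · show q.1.2 + s - q.1.2 = 0 + s
        omega
    rw [← se_iterate hp2, hq, K1']
  have hinv1 : ∀ q : UnrollVertex g b',
      f^[q.1.2] (e.symm (liftU g hsb q)).1.1.1.1 = a' := by
    intro q
    have h1 := hiter' q
    have h2 : ((unroll f a).star (unroll h x)).parent^[q.1.2]
        (e.symm (liftU g hsb q)) = (liftS f h hsa hsx ((unroll f a').star (unroll h x')).root) := h1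
    have h3 : (unroll f a).parent^[q.1.2] (e.symm (liftU g hsb q)).1.1 = (liftS f h hsa hsx ((unroll f a').star (unroll h x')).root).1.1 := by
      have h4 := congrArg Subtype.val h2
      rw [star_iterate_fst] at h4
      exact congrArg Prod.fst h4
    have h5 : (unroll f a).parent^[q.1.2] (e.symm (liftU g hsb q)).1.1 =
        ⟨(f^[q.1.2] (e.symm (liftU g hsb q)).1.1.1.1,
          (e.symm (liftU g hsb q)).1.1.1.2 - q.1.2), _⟩ :=
      unroll_parent_iterate_le f a q.1.2 (e.symm (liftU g hsb q)).1.1.1.2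
        (by rw [hP1 q]; omega) (e.symm (liftU g hsb q)).1.1.1.1
        (e.symm (liftU g hsb q)).1.1.2
    have h6 := h5.symm.trans h3
    exact congrArg (fun z => z.1.1) h6
  have hinv2 : ∀ q : UnrollVertex g b',
      h^[q.1.2] (e.symm (liftU g hsb q)).1.2.1.1 = x' := by
    intro q
    have h1 := hiter' q
    have h3 : (unroll h x).parent^[q.1.2] (e.symm (liftU g hsb q)).1.2 = (liftS f h hsa hsx ((unroll f a').star (unroll h x')).root).1.2 := by
      have h4 := congrArg Subtype.val h1
      rw [star_iterate_fst] at h4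
      exact congrArg Prod.snd h4
    have h5 : (unroll h x).parent^[q.1.2] (e.symm (liftU g hsb q)).1.2 =
        ⟨(h^[q.1.2] (e.symm (liftU g hsb q)).1.2.1.1,
          (e.symm (liftU g hsb q)).1.2.1.2 - q.1.2), _⟩ :=
      unroll_parent_iterate_le h x q.1.2 (e.symm (liftU g hsb q)).1.2.1.2
        (by rw [hP2 q]; omega) (e.symm (liftU g hsb q)).1.2.1.1
        (e.symm (liftU g hsb q)).1.2.2
    have h6 := h5.symm.trans h3
    exact congrArg (fun z => z.1.1) h6
  -- the equivalence
  have hroot0 : (⟨((e (liftS f h hsa hsx ((unroll f a').star (unroll h x')).root)).1.1,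
      (((unroll f a').star (unroll h x')).root).1.1.1.2),
      hfst ((unroll f a').star (unroll h x')).root⟩ : UnrollVertex g b') =
      (unroll g b').root := by
    apply Subtype.ext
    apply Prod.ext
    · show (e (liftS f h hsa hsx ((unroll f a').star (unroll h x')).root)).1.1 = b'
      rw [K1]
      rfl
    · rfl
  refine ⟨⟨fun p => ⟨((e (liftS f h hsa hsx p)).1.1, p.1.1.1.2), hfst p⟩,
    fun q => ⟨(⟨((e.symm (liftU g hsb q)).1.1.1.1, q.1.2), hinv1 q⟩,
               ⟨((e.symm (liftU g hsb q)).1.2.1.1, q.1.2), hinv2 q⟩), by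
      rw [unroll_height f a' _ q.1.2 (hinv1 q), unroll_height h x' _ q.1.2 (hinv2 q)]⟩,
    ?_, ?_⟩, ?_, ?_⟩
  · -- left inverse
    intro p
    have hclaim : liftU g hsb ⟨((e (liftS f h hsa hsx p)).1.1, p.1.1.1.2), hfst p⟩ =
        e (liftS f h hsa hsx p) := by
      apply Subtype.ext
      apply Prod.ext
      · rfl
      · show p.1.1.1.2 + s = (e (liftS f h hsa hsx p)).1.2
        rw [hsnd p]
    have hPl : e.symm (liftU g hsb ⟨((e (liftS f h hsa hsx p)).1.1, p.1.1.1.2), hfst p⟩) =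
        liftS f h hsa hsx p := by
      rw [hclaim, e.symm_apply_apply]
    apply Subtype.ext
    apply Prod.ext
    · apply Subtype.ext
      apply Prod.ext
      · show (e.symm (liftU g hsb _)).1.1.1.1 = p.1.1.1.1
        rw [hPl]
        rfl
      · rfl
    · apply Subtype.ext
      apply Prod.ext
      · show (e.symm (liftU g hsb _)).1.2.1.1 = p.1.2.1.1
        rw [hPl]
        rfl
      · show p.1.1.1.2 = p.1.2.1.2
        exact (hsndR p).symm
  · -- right inverse
    intro q
    have hlift : liftS f h hsa hsx
        ⟨(⟨((e.symm (liftU g hsb q)).1.1.1.1, q.1.2), hinv1 q⟩,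
          ⟨((e.symm (liftU g hsb q)).1.2.1.1, q.1.2), hinv2 q⟩), by
            rw [unroll_height f a' _ q.1.2 (hinv1 q), unroll_height h x' _ q.1.2 (hinv2 q)]⟩ =
        e.symm (liftU g hsb q) := by
      apply Subtype.ext
      apply Prod.ext
      · apply Subtype.ext
        apply Prod.ext
        · rfl
        · show q.1.2 + s = (e.symm (liftU g hsb q)).1.1.1.2
          rw [hP1 q]
      · apply Subtype.ext
        apply Prod.ext
        · rfl
        · show q.1.2 + s = (e.symm (liftU g hsb q)).1.2.1.2
          rw [hP2 q]
    apply Subtype.ext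
    apply Prod.ext
    · show (e (liftS f h hsa hsx _)).1.1 = q.1.1
      rw [hlift, e.apply_symm_apply]
      rfl
    · rfl
  · -- root
    erw [Equiv.coe_fn_mk]
    exact hroot0
  · -- parent
    intro p
    erw [Equiv.coe_fn_mk]
    by_cases hz : p.1.1.1.2 = 0
    · -- p is the root
      have hproot : p = ((unroll f a').star (unroll h x')).root := by
        have hz2 : p.1.2.1.2 = 0 := by rw [hsndR p, hz]
        apply Subtype.ext
        apply Prod.ext
        · apply Subtype.ext
          apply Prod.ext
          · show p.1.1.1.1 = a'
            have h9 := p.1.1.2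
            rw [hz] at h9
            exact h9
          · exact hz
        · apply Subtype.ext
          apply Prod.ext
          · show p.1.2.1.1 = x'
            have h9 := p.1.2.2
            rw [hz2] at h9
            exact h9
          · exact hz2
      rw [hproot, ((unroll f a').star (unroll h x')).parent_root, hroot0,
        (unroll g b').parent_root]
    · -- p is not the root
      obtain ⟨m, hm⟩ : ∃ m, p.1.1.1.2 = m + 1 := ⟨p.1.1.1.2 - 1, by omega⟩
      have hm2 : p.1.2.1.2 = m + 1 := by rw [hsndR p, hm]
      have hpar1 : (unroll f a').parent p.1.1 =
          ⟨(f p.1.1.1.1, p.1.1.1.2 - 1), by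
            have h2 : p.1.1.1.2 - 1 + 1 = p.1.1.1.2 := by omega
            have h9 := p.1.1.2
            rw [← h2, Function.iterate_succ_apply] at h9
            exact h9⟩ :=
        unroll_parent_pos f a' p.1.1.1.1 p.1.1.1.2 (by omega) p.1.1.2
      have hpar2 : (unroll h x').parent p.1.2 =
          ⟨(h p.1.2.1.1, p.1.2.1.2 - 1), by
            have h2 : p.1.2.1.2 - 1 + 1 = p.1.2.1.2 := by omega
            have h9 := p.1.2.2
            rw [← h2, Function.iterate_succ_apply] at h9
            exact h9⟩ :=
        unroll_parent_pos h x' p.1.2.1.1 p.1.2.1.2 (by omega) p.1.2.2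
      have hq1 : (unroll f a).parent (liftU f hsa p.1.1) =
          ⟨(f p.1.1.1.1, p.1.1.1.2 + s - 1), by
            have h2 : p.1.1.1.2 + s - 1 + 1 = p.1.1.1.2 + s := by omega
            have h9 := (liftU f hsa p.1.1).2
            rw [show (liftU f hsa p.1.1).1.2 = p.1.1.1.2 + s from rfl] at h9
            rw [← h2, Function.iterate_succ_apply] at h9
            exact h9⟩ :=
        unroll_parent_pos f a p.1.1.1.1 (p.1.1.1.2 + s) (by omega) (liftU f hsa p.1.1).2
      have hq2 : (unroll h x).parent (liftU h hsx p.1.2) =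
          ⟨(h p.1.2.1.1, p.1.2.1.2 + s - 1), by
            have h2 : p.1.2.1.2 + s - 1 + 1 = p.1.2.1.2 + s := by omega
            have h9 := (liftU h hsx p.1.2).2
            rw [show (liftU h hsx p.1.2).1.2 = p.1.2.1.2 + s from rfl] at h9
            rw [← h2, Function.iterate_succ_apply] at h9
            exact h9⟩ :=
        unroll_parent_pos h x p.1.2.1.1 (p.1.2.1.2 + s) (by omega) (liftU h hsx p.1.2).2
      have e1 : liftU f hsa ((unroll f a').parent p.1.1) =
          (unroll f a).parent (liftU f hsa p.1.1) := by
        rw [hpar1, hq1]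
        apply Subtype.ext
        show ((f p.1.1.1.1, p.1.1.1.2 - 1 + s) : α × ℕ) = (f p.1.1.1.1, p.1.1.1.2 + s - 1)
        rw [Prod.mk.injEq]
        exact ⟨rfl, by omega⟩
      have e2 : liftU h hsx ((unroll h x').parent p.1.2) =
          (unroll h x).parent (liftU h hsx p.1.2) := by
        rw [hpar2, hq2]
        apply Subtype.ext
        show ((h p.1.2.1.1, p.1.2.1.2 - 1 + s) : γ × ℕ) = (h p.1.2.1.1, p.1.2.1.2 + s - 1)
        rw [Prod.mk.injEq]
        exact ⟨rfl, by omega⟩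
      have hC1 : liftS f h hsa hsx (((unroll f a').star (unroll h x')).parent p) =
          ((unroll f a).star (unroll h x)).parent (liftS f h hsa hsx p) := by
        apply Subtype.ext
        show (liftU f hsa ((unroll f a').parent p.1.1),
            liftU h hsx ((unroll h x').parent p.1.2)) =
          ((unroll f a).parent (liftU f hsa p.1.1), (unroll h x).parent (liftU h hsx p.1.2))
        rw [Prod.mk.injEq]
        exact ⟨e1, e2⟩
      have hqpar : (unroll g b).parent (e (liftS f h hsa hsx p)) =
          ⟨(g (e (liftS f h hsa hsx p)).1.1, (e (liftS f h hsa hsx p)).1.2 - 1), by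
            have h2 : (e (liftS f h hsa hsx p)).1.2 - 1 + 1 =
                (e (liftS f h hsa hsx p)).1.2 := by
              have := hsnd p
              omega
            have h9 := (e (liftS f h hsa hsx p)).2
            rw [← h2, Function.iterate_succ_apply] at h9
            exact h9⟩ :=
        unroll_parent_pos g b (e (liftS f h hsa hsx p)).1.1 (e (liftS f h hsa hsx p)).1.2
          (by rw [hsnd p]; omega) (e (liftS f h hsa hsx p)).2
      have hbpar : (unroll g b').parent
          ⟨((e (liftS f h hsa hsx p)).1.1, p.1.1.1.2), hfst p⟩ =
          ⟨(g (e (liftS f h hsa hsx p)).1.1, p.1.1.1.2 - 1), by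
            have h2 : p.1.1.1.2 - 1 + 1 = p.1.1.1.2 := by omega
            have h9 := hfst p
            rw [← h2, Function.iterate_succ_apply] at h9
            exact h9⟩ :=
        unroll_parent_pos g b' (e (liftS f h hsa hsx p)).1.1 p.1.1.1.2 (by omega) (hfst p)
      rw [hbpar]
      apply Subtype.ext
      apply Prod.ext
      · show (e (liftS f h hsa hsx (((unroll f a').star (unroll h x')).parent p))).1.1 =
          g (e (liftS f h hsa hsx p)).1.1
        rw [hC1, hp, hqpar]
      · show (((unroll f a').star (unroll h x')).parent p).1.1.1.2 = p.1.1.1.2 - 1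
        show ((unroll f a').parent p.1.1).1.2 = p.1.1.1.2 - 1
        rw [hpar1]

end Shift

end RSI
namespace RSI
open DDS DDS.InTree Function

section RollSide

variable {γ : Type*} [Finite γ] [Nonempty γ] {h : γ → γ} (hc : FGConnected h)
  {X₀ : γ} (hX₀ : Per h X₀) {c : ℕ} (hcc : c = Nat.card {w : γ // Per h w})

/-- the unique index in the window `[d(w)+1, d(w)+1+c)` with `h^[i] w = X₀` -/
noncomputable def widx (h : γ → γ) (X₀ : γ) (w : γ) : ℕ :=
  sInf {i | h^[i] w = X₀ ∧ fgdist h w + 1 ≤ i}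

include hc hX₀ hcc

lemma widx_set_nonempty (w : γ) : Set.Nonempty {i | h^[i] w = X₀ ∧ fgdist h w + 1 ≤ i} := by
  obtain ⟨K, hK⟩ := exists_iter_eq hc hX₀ (p := h^[fgdist h w] w)
  have hc1 : 1 ≤ c := hcc ▸ card_per_pos hc
  refine ⟨c + (K + fgdist h w), ?_, by omega⟩
  show h^[c + (K + fgdist h w)] w = X₀
  rw [Function.iterate_add_apply, Function.iterate_add_apply, hK,
    show h^[c] X₀ = X₀ from by rw [hcc]; exact per_cycle hc hX₀]

lemma widx_spec1 (w : γ) : h^[widx h X₀ w] w = X₀ :=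
  (Nat.sInf_mem (widx_set_nonempty hc hX₀ hcc w)).1

lemma widx_spec2 (w : γ) : fgdist h w + 1 ≤ widx h X₀ w :=
  (Nat.sInf_mem (widx_set_nonempty hc hX₀ hcc w)).2

lemma widx_lt (w : γ) : widx h X₀ w < fgdist h w + 1 + c := by
  by_contra hge
  push_neg at hge
  have hc1 : 1 ≤ c := hcc ▸ card_per_pos hc
  have hmem : widx h X₀ w - c ∈ {i | h^[i] w = X₀ ∧ fgdist h w + 1 ≤ i} := by
    constructor
    · show h^[widx h X₀ w - c] w = X₀
      have hper : Per h (h^[widx h X₀ w - c] w) := per_of_ge_fgdist h (by omega)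
      have h1 : h^[c] (h^[widx h X₀ w - c] w) = h^[widx h X₀ w - c] w := by
        have h1' := per_cycle hc hper
        rw [← hcc] at h1'
        exact h1'
      have h2 : h^[c] (h^[widx h X₀ w - c] w) = h^[widx h X₀ w] w := by
        rw [← Function.iterate_add_apply, show c + (widx h X₀ w - c) = widx h X₀ w by omega]
      rw [← h1, h2]
      exact widx_spec1 hc hX₀ hcc w
    · show fgdist h w + 1 ≤ widx h X₀ w - c
      omega
  have h4 : widx h X₀ w ≤ widx h X₀ w - c := Nat.sInf_le hmem
  have h3 := widx_spec2 hc hX₀ hcc w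
  omega

lemma widx_two_eq (w : γ) {i j : ℕ} (hi : h^[i] w = X₀) (hj : h^[j] w = X₀)
    (hij : i < j) (hlt : j - i < c) : False := by
  have h1 : h^[j - i] X₀ = X₀ := by
    have h2 : h^[j - i] (h^[i] w) = h^[j] w := by
      rw [← Function.iterate_add_apply, show j - i + i = j by omega]
    rw [hi] at h2
    rw [h2, hj]
  exact per_min hc hX₀ (by omega) (show j - i < Nat.card {w : γ // Per h w} from by
    rw [← hcc]; omega) h1

lemma widx_unique (w : γ) {i : ℕ} (hi1 : h^[i] w = X₀) (hi2 : fgdist h w + 1 ≤ i)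
    (hi3 : i < fgdist h w + 1 + c) : i = widx h X₀ w := by
  have hs1 := widx_spec1 hc hX₀ hcc w
  have hs2 := widx_spec2 hc hX₀ hcc w
  have hs3 := widx_lt hc hX₀ hcc w
  rcases Nat.lt_trichotomy i (widx h X₀ w) with hlt | heq | hgt
  · exact (widx_two_eq hc hX₀ hcc w hi1 hs1 hlt (by omega)).elim
  · exact heq
  · exact (widx_two_eq hc hX₀ hcc w hs1 hi1 hgt (by omega)).elim

/-- deep vertices with periodic base are recognized by having a descendant `H+1` above -/
lemma crit (T H : ℕ) (hH : Nat.card γ ≤ H) {w : γ} {i : ℕ} (hw : h^[i] w = X₀)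
    (hiT : i + (H + 1) ≤ T) :
    Per h w ↔ ∃ v' : (treeLF (unroll h X₀) T).V,
      (treeLF (unroll h X₀) T).lev v' = i + (H + 1) ∧
      (treeLF (unroll h X₀) T).par^[H + 1] v' =
        ⟨⟨(w, i), hw⟩, by rw [unroll_height]; omega⟩ := by
  have hc1 : 1 ≤ c := hcc ▸ card_per_pos hc
  constructor
  · intro hper
    have harith : (H + 1) + (c - 1) * (H + 1) = c * (H + 1) := by
      obtain ⟨d, rfl⟩ : ∃ d, c = d + 1 := ⟨c - 1, by omega⟩
      simp only [Nat.add_sub_cancel]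
      ring
    have hfix : h^[c * (H + 1)] w = w :=
      iterate_fix_mul h (show h^[c] w = w from by rw [hcc]; exact per_cycle hc hper) (H + 1)
    have hcond : h^[i + (H + 1)] (h^[(c - 1) * (H + 1)] w) = X₀ := by
      rw [← Function.iterate_add_apply,
        show i + (H + 1) + (c - 1) * (H + 1) = i + c * (H + 1) by omega,
        Function.iterate_add_apply, hfix, hw]
    refine ⟨⟨⟨(h^[(c - 1) * (H + 1)] w, i + (H + 1)), hcond⟩,
      by rw [unroll_height]; omega⟩, ?_, ?_⟩
    · show (unroll h X₀).height ⟨(h^[(c - 1) * (H + 1)] w, i + (H + 1)), hcond⟩ = i + (H + 1)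
      rw [unroll_height]
    · apply Subtype.ext
      erw [treeLF_par_iterate]
      show (unroll h X₀).parent^[H + 1]
          (⟨(h^[(c - 1) * (H + 1)] w, i + (H + 1)), hcond⟩ : UnrollVertex h X₀) =
        ⟨(w, i), hw⟩
      rw [unroll_parent_iterate_le h X₀ (H + 1) (i + (H + 1)) (by omega) _ hcond]
      apply Subtype.ext
      apply Prod.ext
      · show h^[H + 1] (h^[(c - 1) * (H + 1)] w) = w
        rw [← Function.iterate_add_apply, harith, hfix]
      · show i + (H + 1) - (H + 1) = i
        omega
  · rintro ⟨v', hlev, hpar⟩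
    have hsnd : v'.1.1.2 = i + (H + 1) := by
      rw [← unroll_height' v'.1]
      exact hlev
    have hval := congrArg Subtype.val hpar
    rw [treeLF_par_iterate] at hval
    have h5 : (unroll h X₀).parent^[H + 1] v'.1 =
        ⟨(h^[H + 1] v'.1.1.1, v'.1.1.2 - (H + 1)), _⟩ :=
      unroll_parent_iterate_le h X₀ (H + 1) v'.1.1.2 (by omega) v'.1.1.1 v'.1.2
    have h6 := h5.symm.trans hval
    have h7 : h^[H + 1] v'.1.1.1 = w := congrArg (fun z => z.1.1) h6
    rw [← h7]
    exact per_of_ge_fgdist h (le_trans (le_trans (fgdist_le_card h _) hH) (by omega))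

end RollSide

end RSI
namespace RSI
open DDS DDS.InTree Function

section RollMain

variable {γ δ : Type*} [Finite γ] [Finite δ] [Nonempty γ] [Nonempty δ]
  {h : γ → γ} {h' : δ → δ}

/-- image vertices have the same index -/
lemma e_snd {X₀ : γ} {y : δ} {T : ℕ}
    (e : (treeLF (unroll h X₀) T).V ≃ (treeLF (unroll h' y) T).V)
    (hlev : ∀ v, (treeLF (unroll h' y) T).lev (e v) = (treeLF (unroll h X₀) T).lev v)
    (v : (treeLF (unroll h X₀) T).V) : (e v).1.1.2 = v.1.1.2 := by
  have h9 := hlev v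
  rwa [treeLF_lev, treeLF_lev, unroll_height' (e v).1, unroll_height' v.1] at h9

/-- periodicity of the base point of a deep vertex is preserved -/
lemma transport_per (hhc : FGConnected h) (hh'c : FGConnected h')
    {X₀ : γ} (hX₀ : Per h X₀) {y : δ} (hy : Per h' y)
    {c : ℕ} (hcX : c = Nat.card {w : γ // Per h w}) (hcY : c = Nat.card {w : δ // Per h' w})
    {H T : ℕ} (hHγ : Nat.card γ ≤ H) (hHδ : Nat.card δ ≤ H)
    (e : (treeLF (unroll h X₀) T).V ≃ (treeLF (unroll h' y) T).V)
    (hlev : ∀ v, (treeLF (unroll h' y) T).lev (e v) = (treeLF (unroll h X₀) T).lev v)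
    (hpar : ∀ v, e ((treeLF (unroll h X₀) T).par v) = (treeLF (unroll h' y) T).par (e v))
    (w : γ) (i : ℕ) (hw : h^[i] w = X₀) (hiT : i + (H + 1) ≤ T)
    (hvb : (unroll h X₀).height ⟨(w, i), hw⟩ ≤ T) :
    Per h w ↔ Per h' ((e ⟨⟨(w, i), hw⟩, hvb⟩).1.1.1) := by
  have hsndv : (e ⟨⟨(w, i), hw⟩, hvb⟩).1.1.2 = i := e_snd e hlev _
  have hwY : h'^[i] ((e ⟨⟨(w, i), hw⟩, hvb⟩).1.1.1) = y := by
    have h9 := (e ⟨⟨(w, i), hw⟩, hvb⟩).1.2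
    rw [hsndv] at h9
    exact h9
  constructor
  · intro hper
    obtain ⟨v', hl, hp'⟩ := (crit hhc hX₀ hcX T H hHγ hw hiT).1 hper
    apply (crit hh'c hy hcY T H hHδ hwY (by omega)).2
    refine ⟨e v', (hlev v').trans hl, ?_⟩
    rw [← lf_iterate hpar (H + 1) v', hp']
    apply Subtype.ext
    apply Subtype.ext
    exact Prod.ext rfl hsndv
  · intro hper'
    obtain ⟨v', hl, hp'⟩ := (crit hh'c hy hcY T H hHδ hwY (by omega)).1 hper'
    apply (crit hhc hX₀ hcX T H hHγ hw hiT).2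
    refine ⟨e.symm v', ?_, ?_⟩
    · have h9 := hlev (e.symm v')
      rw [e.apply_symm_apply] at h9
      exact h9.symm.trans hl
    · apply e.injective
      rw [lf_iterate hpar, e.apply_symm_apply, hp']
      exact Subtype.ext (Subtype.ext (Prod.ext rfl hsndv.symm))

/-- spine vertices map to spine vertices -/
lemma transport_spine (hhc : FGConnected h) (hh'c : FGConnected h')
    {X₀ : γ} (hX₀ : Per h X₀) {y : δ} (hy : Per h' y)
    {c : ℕ} (hcX : c = Nat.card {w : γ // Per h w}) (hcY : c = Nat.card {w : δ // Per h' w})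
    {H T : ℕ} (hHγ : Nat.card γ ≤ H) (hHδ : Nat.card δ ≤ H)
    (e : (treeLF (unroll h X₀) T).V ≃ (treeLF (unroll h' y) T).V)
    (hlev : ∀ v, (treeLF (unroll h' y) T).lev (e v) = (treeLF (unroll h X₀) T).lev v)
    (hpar : ∀ v, e ((treeLF (unroll h X₀) T).par v) = (treeLF (unroll h' y) T).par (e v))
    (j : ℕ) (hjT : j + (H + 1) ≤ T) (u : γ) (hu : Per h u) (huj : h^[j] u = X₀)
    (hvb : (unroll h X₀).height ⟨(u, j), huj⟩ ≤ T) :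
    (e ⟨⟨(u, j), huj⟩, hvb⟩).1.1.1 = spt h' y c j := by
  have hsndv : (e ⟨⟨(u, j), huj⟩, hvb⟩).1.1.2 = j := e_snd e hlev _
  have hper' : Per h' ((e ⟨⟨(u, j), huj⟩, hvb⟩).1.1.1) :=
    (transport_per hhc hh'c hX₀ hy hcX hcY hHγ hHδ e hlev hpar u j huj hjT hvb).1 hu
  have hcond : h'^[j] ((e ⟨⟨(u, j), huj⟩, hvb⟩).1.1.1) = y := by
    have h9 := (e ⟨⟨(u, j), huj⟩, hvb⟩).1.2
    rw [hsndv] at h9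
    exact h9
  exact spt_unique hh'c hy c hcY hper' hcond

/-- the canonical band vertex of `w` -/
noncomputable def rho (hc : FGConnected h) {X₀ : γ} (hX₀ : Per h X₀) {c : ℕ}
    (hcc : c = Nat.card {w : γ // Per h w}) {H T : ℕ}
    (hH : Nat.card γ ≤ H) (hT : H + c + 2 ≤ T) (w : γ) : (treeLF (unroll h X₀) T).V :=
  ⟨⟨(w, widx h X₀ w), widx_spec1 hc hX₀ hcc w⟩, by
    rw [unroll_height]
    have h1 := widx_lt hc hX₀ hcc w
    have h2 := fgdist_le_card h w
    omega⟩

lemma rho_val (hc : FGConnected h) {X₀ : γ} (hX₀ : Per h X₀) {c : ℕ}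
    (hcc : c = Nat.card {w : γ // Per h w}) {H T : ℕ}
    (hH : Nat.card γ ≤ H) (hT : H + c + 2 ≤ T) (w : γ) :
    (rho hc hX₀ hcc hH hT w).1.1 = (w, widx h X₀ w) := rfl

/-- main half lemma: the band is preserved, and conjugation holds -/
lemma roll_half (hhc : FGConnected h) (hh'c : FGConnected h')
    {X₀ : γ} (hX₀ : Per h X₀) {y : δ} (hy : Per h' y)
    {c : ℕ} (hcX : c = Nat.card {w : γ // Per h w}) (hcY : c = Nat.card {w : δ // Per h' w})
    {H T : ℕ} (hHγ : Nat.card γ ≤ H) (hHδ : Nat.card δ ≤ H) (hT : 2 * H + 2 * c + 5 ≤ T)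
    (hTX : H + c + 2 ≤ T) (hTY : H + c + 2 ≤ T)
    (e : (treeLF (unroll h X₀) T).V ≃ (treeLF (unroll h' y) T).V)
    (hlev : ∀ v, (treeLF (unroll h' y) T).lev (e v) = (treeLF (unroll h X₀) T).lev v)
    (hpar : ∀ v, e ((treeLF (unroll h X₀) T).par v) = (treeLF (unroll h' y) T).par (e v)) :
    (∀ w : γ, e (rho hhc hX₀ hcX hHγ hTX w) =
      rho hh'c hy hcY hHδ hTY ((e (rho hhc hX₀ hcX hHγ hTX w)).1.1.1)) ∧
    (∀ w : γ, (e (rho hhc hX₀ hcX hHγ hTX (h w))).1.1.1 =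
      h' ((e (rho hhc hX₀ hcX hHγ hTX w)).1.1.1)) := by
  have hc1 : 1 ≤ c := hcX ▸ card_per_pos hhc
  have hcH : c ≤ H := by
    rw [hcX]
    exact le_trans (Nat.card_le_card_of_injective Subtype.val Subtype.val_injective) hHγ
  have hwle : ∀ w : γ, widx h X₀ w ≤ H + c := by
    intro w
    have h1 := widx_lt hhc hX₀ hcX w
    have h2 := fgdist_le_card h w
    omega
  -- transport of the periodicity of iterates
  have hsets : ∀ (w : γ) (m : ℕ), m ≤ widx h X₀ w →
      (Per h (h^[m] w) ↔ Per h' (h'^[m] ((e (rho hhc hX₀ hcX hHγ hTX w)).1.1.1))) := by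
    intro w m hm
    have hcond : h^[widx h X₀ w - m] (h^[m] w) = X₀ := by
      rw [← Function.iterate_add_apply, show widx h X₀ w - m + m = widx h X₀ w by omega]
      exact widx_spec1 hhc hX₀ hcX w
    have hvb : (unroll h X₀).height ⟨(h^[m] w, widx h X₀ w - m), hcond⟩ ≤ T := by
      rw [unroll_height]
      have := hwle w
      omega
    have hXm : (treeLF (unroll h X₀) T).par^[m] (rho hhc hX₀ hcX hHγ hTX w) =
        ⟨⟨(h^[m] w, widx h X₀ w - m), hcond⟩, hvb⟩ := by
      apply Subtype.ext
      rw [treeLF_par_iterate]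
      show (unroll h X₀).parent^[m] ⟨(w, widx h X₀ w), widx_spec1 hhc hX₀ hcX w⟩ = _
      rw [unroll_parent_iterate_le h X₀ m (widx h X₀ w) hm w _]
    have hiter := lf_iterate hpar m (rho hhc hX₀ hcX hHγ hTX w)
    rw [hXm] at hiter
    have hYsnd : (e (rho hhc hX₀ hcX hHγ hTX w)).1.1.2 = widx h X₀ w :=
      e_snd e hlev _
    have hYm : ((treeLF (unroll h' y) T).par^[m] (e (rho hhc hX₀ hcX hHγ hTX w))).1.1.1 =
        h'^[m] ((e (rho hhc hX₀ hcX hHγ hTX w)).1.1.1) := by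
      rw [treeLF_par_iterate]
      have h5 : (unroll h' y).parent^[m] (e (rho hhc hX₀ hcX hHγ hTX w)).1 =
          ⟨(h'^[m] (e (rho hhc hX₀ hcX hHγ hTX w)).1.1.1,
            (e (rho hhc hX₀ hcX hHγ hTX w)).1.1.2 - m), _⟩ :=
        unroll_parent_iterate_le h' y m (e (rho hhc hX₀ hcX hHγ hTX w)).1.1.2
          (by omega) (e (rho hhc hX₀ hcX hHγ hTX w)).1.1.1
          (e (rho hhc hX₀ hcX hHγ hTX w)).1.2
      rw [h5]
    have htr := transport_per hhc hh'c hX₀ hy hcX hcY hHγ hHδ e hlev hpar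
      (h^[m] w) (widx h X₀ w - m) hcond (by have := hwle w; omega) hvb
    rw [hiter] at htr
    rw [hYm] at htr
    exact htr
  have hdist : ∀ w : γ, fgdist h' ((e (rho hhc hX₀ hcX hHγ hTX w)).1.1.1) = fgdist h w := by
    intro w
    have hle1 : fgdist h w ≤ widx h X₀ w := by
      have := widx_spec2 hhc hX₀ hcX w
      omega
    have h1 : Per h' (h'^[fgdist h w] ((e (rho hhc hX₀ hcX hHγ hTX w)).1.1.1)) :=
      (hsets w _ hle1).1 (fgdist_spec h w)
    have h2 : fgdist h' ((e (rho hhc hX₀ hcX hHγ hTX w)).1.1.1) ≤ fgdist h w :=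
      Nat.sInf_le h1
    have h3 : Per h (h^[fgdist h' ((e (rho hhc hX₀ hcX hHγ hTX w)).1.1.1)] w) :=
      (hsets w _ (le_trans h2 hle1)).2 (fgdist_spec h' _)
    have h4 : fgdist h w ≤ fgdist h' ((e (rho hhc hX₀ hcX hHγ hTX w)).1.1.1) :=
      Nat.sInf_le h3
    omega
  have hYcond : ∀ w : γ, h'^[widx h X₀ w] ((e (rho hhc hX₀ hcX hHγ hTX w)).1.1.1) = y := by
    intro w
    have h9 := (e (rho hhc hX₀ hcX hHγ hTX w)).1.2
    rw [e_snd e hlev _] at h9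
    exact h9
  have hwidxY : ∀ w : γ, widx h' y ((e (rho hhc hX₀ hcX hHγ hTX w)).1.1.1) = widx h X₀ w := by
    intro w
    refine (widx_unique hh'c hy hcY _ (hYcond w) ?_ ?_).symm
    · rw [hdist w]
      exact widx_spec2 hhc hX₀ hcX w
    · rw [hdist w]
      exact widx_lt hhc hX₀ hcX w
  have hρe : ∀ w : γ, e (rho hhc hX₀ hcX hHγ hTX w) =
      rho hh'c hy hcY hHδ hTY ((e (rho hhc hX₀ hcX hHγ hTX w)).1.1.1) := by
    intro w
    apply Subtype.ext
    apply Subtype.ext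
    apply Prod.ext
    · rfl
    · show (e (rho hhc hX₀ hcX hHγ hTX w)).1.1.2 = widx h' y _
      rw [e_snd e hlev _, hwidxY w]
      rfl
  refine ⟨hρe, ?_⟩
  -- conjugation
  intro w
  have hw2 := widx_spec2 hhc hX₀ hcX w
  by_cases hbig : 2 ≤ widx h X₀ w
  · -- main case
    have hwidxh : widx h X₀ (h w) = widx h X₀ w - 1 := by
      symm
      have c1 : h^[widx h X₀ w - 1] (h w) = X₀ := by
        have c0 : h^[(widx h X₀ w - 1) + 1] w = X₀ := by
          rw [show widx h X₀ w - 1 + 1 = widx h X₀ w by omega]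
          exact widx_spec1 hhc hX₀ hcX w
        rw [Function.iterate_succ_apply] at c0
        exact c0
      by_cases hdz : fgdist h w = 0
      · have hperw : Per h w := (fgdist_eq_zero_iff h).1 hdz
        have hperhw : Per h (h w) := by
          have := per_iterate h hperw 1
          rwa [Function.iterate_one] at this
        have hdz' : fgdist h (h w) = 0 := (fgdist_eq_zero_iff h).2 hperhw
        apply widx_unique hhc hX₀ hcX (h w) c1
        · rw [hdz']; omega
        · rw [hdz']
          have := widx_lt hhc hX₀ hcX w
          rw [hdz] at this
          omega
      · have hnper : ¬ Per h w := fun hp => hdz ((fgdist_eq_zero_iff h).2 hp)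
        have hstep := fgdist_apply h hnper
        apply widx_unique hhc hX₀ hcX (h w) c1
        · omega
        · have := widx_lt hhc hX₀ hcX w
          omega
    have hρpar : rho hhc hX₀ hcX hHγ hTX (h w) =
        (treeLF (unroll h X₀) T).par (rho hhc hX₀ hcX hHγ hTX w) := by
      apply Subtype.ext
      show (⟨(h w, widx h X₀ (h w)), _⟩ : UnrollVertex h X₀) =
        (unroll h X₀).parent ⟨(w, widx h X₀ w), widx_spec1 hhc hX₀ hcX w⟩
      rw [unroll_parent_pos h X₀ w (widx h X₀ w) (by omega) (widx_spec1 hhc hX₀ hcX w)]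
      apply Subtype.ext
      exact Prod.ext rfl hwidxh
    have hY0 : widx h' y ((e (rho hhc hX₀ hcX hHγ hTX w)).1.1.1) ≠ 0 := by
      rw [hwidxY w]; omega
    rw [hρpar, hpar, hρe w]
    show ((unroll h' y).parent ⟨((e (rho hhc hX₀ hcX hHγ hTX w)).1.1.1,
        widx h' y ((e (rho hhc hX₀ hcX hHγ hTX w)).1.1.1)),
        widx_spec1 hh'c hy hcY _⟩).1.1 = h' ((e (rho hhc hX₀ hcX hHγ hTX w)).1.1.1)
    rw [unroll_parent_pos h' y _ _ hY0 (widx_spec1 hh'c hy hcY _)]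
  · -- wrap case : widx w = 1
    have hw1 : widx h X₀ w = 1 := by omega
    have hd0 : fgdist h w = 0 := by omega
    have hperw : Per h w := (fgdist_eq_zero_iff h).1 hd0
    have hw1' : h^[1] w = X₀ := by
      have := widx_spec1 hhc hX₀ hcX w
      rwa [hw1] at this
    have hwspt : w = spt h X₀ c 1 := spt_unique hhc hX₀ c hcX hperw hw1'
    have hhw : h w = X₀ := by
      have h9 : h^[1] w = X₀ := hw1'
      rwa [Function.iterate_one] at h9
    -- rho w is the spine vertex at level 1
    have hρw : (rho hhc hX₀ hcX hHγ hTX w).1 = ⟨(w, 1), hw1'⟩ := by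
      apply Subtype.ext
      exact Prod.ext rfl hw1
    -- φ w = spt' 1
    have hφw : (e (rho hhc hX₀ hcX hHγ hTX w)).1.1.1 = spt h' y c 1 := by
      have hvb1 : (unroll h X₀).height ⟨(w, 1), hw1'⟩ ≤ T := by
        rw [unroll_height]; omega
      have hrw : rho hhc hX₀ hcX hHγ hTX w = ⟨⟨(w, 1), hw1'⟩, hvb1⟩ :=
        Subtype.ext hρw
      rw [hrw]
      exact transport_spine hhc hh'c hX₀ hy hcX hcY hHγ hHδ e hlev hpar 1 (by omega)
        w hperw hw1' hvb1
    -- widx of h w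
    have hwidxhw : widx h X₀ (h w) = c := by
      symm
      have hdhw : fgdist h (h w) = 0 :=
        (fgdist_eq_zero_iff h).2 (by rw [hhw]; exact hX₀)
      apply widx_unique hhc hX₀ hcX (h w)
      · show h^[c] (h w) = X₀
        rw [hhw]
        have h9 := per_cycle hhc hX₀
        rwa [← hcX] at h9
      · omega
      · omega
    have hsptc : spt h X₀ c c = X₀ := by
      have h9 := spt_add_c hhc hX₀ c hcX 0
      rw [Nat.zero_add] at h9
      exact h9
    have hhwc : h^[c] (h w) = X₀ := by
      rw [hhw]
      have h9 := per_cycle hhc hX₀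
      rwa [← hcX] at h9
    have hρhw : (rho hhc hX₀ hcX hHγ hTX (h w)).1 = ⟨(h w, c), hhwc⟩ := by
      apply Subtype.ext
      exact Prod.ext rfl hwidxhw
    have hperhw : Per h (h w) := by rw [hhw]; exact hX₀
    have hφhw : (e (rho hhc hX₀ hcX hHγ hTX (h w))).1.1.1 = spt h' y c c := by
      have hvbc : (unroll h X₀).height ⟨(h w, c), hhwc⟩ ≤ T := by
        rw [unroll_height]; omega
      have hrw : rho hhc hX₀ hcX hHγ hTX (h w) = ⟨⟨(h w, c), hhwc⟩, hvbc⟩ :=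
        Subtype.ext hρhw
      rw [hrw]
      exact transport_spine hhc hh'c hX₀ hy hcX hcY hHγ hHδ e hlev hpar c (by omega)
        (h w) hperhw hhwc hvbc
    rw [hφhw, hφw]
    -- spt' c = h' (spt' 1)
    have h9 := spt_parent hh'c hy c hcY 0
    have h10 := spt_add_c hh'c hy c hcY 0
    rw [Nat.zero_add] at h10
    rw [h9, h10]

end RollMain

end RSI
namespace RSI
open DDS DDS.InTree Function

/-- rolling: an isomorphism of deep cut forests gives an isomorphism of the FGs -/
lemma roll {γ δ : Type*} [Finite γ] [Finite δ] [Nonempty γ] [Nonempty δ]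
    {h : γ → γ} {h' : δ → δ} (hhc : FGConnected h) (hh'c : FGConnected h')
    {X₀ : γ} (hX₀ : Per h X₀) {y : δ} (hy : Per h' y)
    {c : ℕ} (hcX : c = Nat.card {w : γ // Per h w}) (hcY : c = Nat.card {w : δ // Per h' w})
    {H T : ℕ} (hHγ : Nat.card γ ≤ H) (hHδ : Nat.card δ ≤ H) (hT : 2 * H + 2 * c + 5 ≤ T)
    (hiso : LF.Iso (treeLF (unroll h X₀) T) (treeLF (unroll h' y) T)) : FGIso h h' := by
  obtain ⟨e, hlev, hpar⟩ := hiso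
  have hTX : H + c + 2 ≤ T := by omega
  have hlev2 : ∀ v, (treeLF (unroll h X₀) T).lev (e.symm v) =
      (treeLF (unroll h' y) T).lev v := by
    intro v
    have h9 := hlev (e.symm v)
    rw [e.apply_symm_apply] at h9
    exact h9.symm
  have hpar2 : ∀ v, e.symm ((treeLF (unroll h' y) T).par v) =
      (treeLF (unroll h X₀) T).par (e.symm v) := by
    intro v
    apply e.injective
    rw [e.apply_symm_apply, hpar, e.apply_symm_apply]
  obtain ⟨hρe, hconj⟩ := roll_half hhc hh'c hX₀ hy hcX hcY hHγ hHδ hT hTX hTX e hlev hpar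
  obtain ⟨hρe', hconj'⟩ := roll_half hh'c hhc hy hX₀ hcY hcX hHδ hHγ hT hTX hTX e.symm
    hlev2 hpar2
  have hli : ∀ w : γ,
      (e.symm (rho hh'c hy hcY hHδ hTX ((e (rho hhc hX₀ hcX hHγ hTX w)).1.1.1))).1.1.1 = w := by
    intro w
    have l2 : e.symm (rho hh'c hy hcY hHδ hTX ((e (rho hhc hX₀ hcX hHγ hTX w)).1.1.1)) =
        rho hhc hX₀ hcX hHγ hTX w := by
      rw [← hρe w, e.symm_apply_apply]
    rw [l2]
    rfl
  have hri : ∀ w' : δ,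
      (e (rho hhc hX₀ hcX hHγ hTX ((e.symm (rho hh'c hy hcY hHδ hTX w')).1.1.1))).1.1.1
        = w' := by
    intro w'
    have l2 : e (rho hhc hX₀ hcX hHγ hTX ((e.symm (rho hh'c hy hcY hHδ hTX w')).1.1.1)) =
        rho hh'c hy hcY hHδ hTX w' := by
      rw [← hρe' w', e.apply_symm_apply]
    rw [l2]
    rfl
  refine ⟨⟨fun w => (e (rho hhc hX₀ hcX hHγ hTX w)).1.1.1,
    fun w' => (e.symm (rho hh'c hy hcY hHδ hTX w')).1.1.1, hli, hri⟩, ?_⟩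
  intro w
  simp only [Equiv.coe_fn_mk]
  exact hconj w

end RSI

open DDS DDS.InTree RSI Function

/-- If `U(f,a) ⋆ U(h,x) ≅ U(g,b)` and, for some `k`, `U(f, f^[k] a) ⋆ U(h',y) ≅ U(g, g^[k] b)`,
where `f, g, h, h'` are connected FGs on finite nonempty types with
`lcm(c_A, c_X) = c_B` and `c_Y = c_X`, then the functional graphs `h` and `h'` are
isomorphic. -/
theorem roll_shift_iso {α β γ δ : Type*} [Fintype α] [Fintype β] [Fintype γ] [Fintype δ]
    [Nonempty α] [Nonempty β] [Nonempty γ] [Nonempty δ]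
    (f : α → α) (g : β → β) (h : γ → γ) (h' : δ → δ)
    (hfc : FGConnected f) (hgc : FGConnected g) (hhc : FGConnected h) (hh'c : FGConnected h')
    (hlcm : Nat.lcm (periodicCount f) (periodicCount h) = periodicCount g)
    (hYX : periodicCount h' = periodicCount h)
    (a : α) (x : γ) (y : δ) (b : β)
    (ha : ∃ n, 1 ≤ n ∧ f^[n] a = a) (hx : ∃ n, 1 ≤ n ∧ h^[n] x = x)
    (hy : ∃ n, 1 ≤ n ∧ h'^[n] y = y) (hb : ∃ n, 1 ≤ n ∧ g^[n] b = b)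
    (h1 : Isomorphic ((unroll f a).star (unroll h x)).Edge (unroll g b).Edge)
    (h2 : ∃ k : ℕ, Isomorphic ((unroll f (f^[k] a)).star (unroll h' y)).Edge
        (unroll g (g^[k] b)).Edge) :
    FGIso h h' := by
  obtain ⟨k, h2e⟩ := h2
  -- periodic point facts
  have hPa : Per f a := ha
  have hPx : Per h x := hx
  have hPy : Per h' y := hy
  have hPb : Per g b := hb
  -- cycle lengths
  have hcA : periodicCount f = Nat.card {w : α // Per f w} := rfl
  have hcB : periodicCount g = Nat.card {w : β // Per g w} := rfl
  have hcX : periodicCount h = Nat.card {w : γ // Per h w} := rfl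
  have hcY : periodicCount h = Nat.card {w : δ // Per h' w} := by
    rw [← hYX]; rfl
  have hcB1 : 1 ≤ periodicCount g := by rw [hcB]; exact card_per_pos hgc
  -- the shift amount
  set N := periodicCount g * (k + 1) with hN
  have hkN : k ≤ N := by
    have : k + 1 ≤ N := by
      rw [hN]
      exact Nat.le_mul_of_pos_left (k + 1) (by omega)
    omega
  set s := N - k with hs
  -- shifted base points
  have hPb' : Per g (g^[k] b) := per_iterate g hPb k
  have hsb : g^[s] (g^[k] b) = b := by
    rw [← Function.iterate_add_apply, show s + k = N by omega, hN]
    exact iterate_fix_mul g (show g^[periodicCount g] b = b from hcB ▸ per_cycle hgc hPb) _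
  have hPa' : Per f (f^[k] a) := per_iterate f hPa k
  have hsa : f^[s] (f^[k] a) = a := by
    rw [← Function.iterate_add_apply, show s + k = N by omega, hN]
    obtain ⟨m, hm⟩ : periodicCount f ∣ periodicCount g := by
      rw [← hlcm]
      exact Nat.dvd_lcm_left _ _
    rw [hm, Nat.mul_assoc]
    exact iterate_fix_mul f (show f^[periodicCount f] a = a from hcA ▸ per_cycle hfc hPa) _
  have hPx' : Per h (spt h x (periodicCount h) s) := spt_per hhc hPx _ hcX s
  have hsx : h^[s] (spt h x (periodicCount h) s) = x := spt_spec hhc hPx _ hcX s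
  -- shift the first isomorphism
  obtain ⟨e1, he1r, he1p⟩ := structured_of_isomorphic h1
  obtain ⟨e1', he1'r, he1'p⟩ := shift_structured hgc he1r he1p hPa' hsa hPx' hsx hPb' hsb
  obtain ⟨e2, he2r, he2p⟩ := structured_of_isomorphic h2e
  -- cut forests
  set c := periodicCount h with hcdef
  set H := Nat.card γ + Nat.card δ + 1 with hH
  set T := 2 * H + 2 * c + 5 with hT
  have hiso1 : LF.Iso
      (LF.prod (treeLF (unroll f (f^[k] a)) T) (treeLF (unroll h (spt h x c s)) T))
      (treeLF (unroll g (g^[k] b)) T) :=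
    (LF.Iso.symm (star_treeLF_iso (unroll f (f^[k] a)) (unroll h (spt h x c s)) T)).trans
      (treeLF_iso he1'r he1'p T)
  have hiso2 : LF.Iso
      (LF.prod (treeLF (unroll f (f^[k] a)) T) (treeLF (unroll h' y) T))
      (treeLF (unroll g (g^[k] b)) T) :=
    (LF.Iso.symm (star_treeLF_iso (unroll f (f^[k] a)) (unroll h' y) T)).trans
      (treeLF_iso he2r he2p T)
  have hisoXY : LF.Iso (treeLF (unroll h (spt h x c s)) T) (treeLF (unroll h' y) T) := by
    -- cancellation with the spine of A
    obtain ⟨nA, hnA1, hnA2⟩ := hPa'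
    apply LF.cancel (A := treeLF (unroll f (f^[k] a)) T)
      (X := treeLF (unroll h (spt h x c s)) T) (Y := treeLF (unroll h' y) T) T
      (fun v => v.2) (fun v => v.2)
      (fun j => ⟨⟨(f^[(nA - 1) * min j T] (f^[k] a), min j T), by
        rw [← Function.iterate_add_apply,
          show min j T + (nA - 1) * min j T = nA * min j T by
            obtain ⟨d, rfl⟩ : ∃ d, nA = d + 1 := ⟨nA - 1, by omega⟩
            simp only [Nat.add_sub_cancel]
            ring]
        exact iterate_fix_mul f hnA2 _⟩, by
        rw [unroll_height]
        exact Nat.min_le_right _ _⟩)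
    · intro j hj
      show (unroll f (f^[k] a)).height _ = j
      rw [unroll_height]
      omega
    · intro j hj
      apply Subtype.ext
      have hm1 : min (j + 1) T = j + 1 := by omega
      have hm0 : min j T = j := by omega
      show (unroll f (f^[k] a)).parent ⟨(f^[(nA - 1) * min (j + 1) T] (f^[k] a),
        min (j + 1) T), _⟩ = ⟨(f^[(nA - 1) * min j T] (f^[k] a), min j T), _⟩
      rw [unroll_parent_pos f (f^[k] a) _ _ (by omega) _]
      apply Subtype.ext
      apply Prod.ext
      · show f (f^[(nA - 1) * min (j + 1) T] (f^[k] a)) = f^[(nA - 1) * min j T] (f^[k] a)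
        rw [hm1, hm0, ← Function.iterate_succ_apply' f ((nA - 1) * (j + 1)) (f^[k] a)]
        simp only [Nat.succ_eq_add_one]
        rw [show (nA - 1) * (j + 1) + 1 = (nA - 1) * j + nA by
            obtain ⟨d, rfl⟩ : ∃ d, nA = d + 1 := ⟨nA - 1, by omega⟩
            simp only [Nat.add_sub_cancel]
            ring,
          Function.iterate_add_apply, hnA2]
      · show min (j + 1) T - 1 = min j T
        omega
    · exact hiso1.trans (LF.Iso.symm hiso2)
  -- roll
  exact roll hhc hh'c hPx' hPy hcX hcY (by omega) (by omega) (le_refl T) hisoXY
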